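/- arXiv:2303.07414 — 4 statements merged into one kernel-verified Lean document; each statement's English description precedes it below -/
import Mathlib

section
/- Let G be a graph and u, v, w three distinct vertices with uw not an edge of G. Then v lies on some weakly toll (u,w)-walk if and only if there exist vertices v_u ∈ N(u) and v_w ∈ N(w) such that the graph G − S(v_u, v_w) contains a connected component C with {v_u, v_w, v} ⊆ V(C), where S(v_u, v_w) = (N[u] \ {v_u}) ∪ (N[w] \ {v_w}). -/
open SimpleGraph

variable {V : Type*}

/-- Closed neighborhood N[x]. -/
def closedNbhd (G : SimpleGraph V) (x : V) : Set V := insert x (G.neighborSet x)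

/-- The true-twin class of `x`: vertices with the same closed neighborhood. -/
def twinClass (G : SimpleGraph V) (x : V) : Set V :=
  {y | closedNbhd G y = closedNbhd G x}

/-- A weakly toll walk between distinct nonadjacent endpoints: the first endpoint is
adjacent only to the second vertex of the walk, and the last endpoint only to the
second-to-last vertex. -/
def IsWeaklyTollWalk (G : SimpleGraph V) {u w : V} (p : G.Walk u w) : Prop :=
  u ≠ w ∧ ¬ G.Adj u w ∧
  (∀ x ∈ p.support, G.Adj u x → x = p.getVert 1) ∧
  (∀ x ∈ p.support, G.Adj x w → x = p.getVert (p.length - 1))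

/-- The weakly toll interval of a set. -/
def wtInterval (G : SimpleGraph V) (S : Set V) : Set V :=
  S ∪ {x | ∃ u ∈ S, ∃ w ∈ S, ∃ p : G.Walk u w, IsWeaklyTollWalk G p ∧ x ∈ p.support}

/-- Weakly toll convex set. -/
def WTConvex (G : SimpleGraph V) (S : Set V) : Prop := wtInterval G S = S

/-- The weakly toll convex hull. -/
def wtHull (G : SimpleGraph V) (S : Set V) : Set V :=
  ⋂₀ {T : Set V | S ⊆ T ∧ WTConvex G T}

/-- The weakly toll interval number. -/
noncomputable def wtn (G : SimpleGraph V) [Fintype V] : ℕ :=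
  sInf {n | ∃ S : Finset V, S.card = n ∧ wtInterval G ↑S = Set.univ}

/-- The weakly toll hull number. -/
noncomputable def wth (G : SimpleGraph V) [Fintype V] : ℕ :=
  sInf {n | ∃ S : Finset V, S.card = n ∧ wtHull G ↑S = Set.univ}

/-- `S` separates some pair of vertices of `G`. -/
def IsSeparator (G : SimpleGraph V) (S : Set V) : Prop :=
  ∃ a, ∃ ha : a ∈ (Sᶜ : Set V), ∃ b, ∃ hb : b ∈ (Sᶜ : Set V),
    G.Reachable a b ∧ ¬ (G.induce (Sᶜ : Set V)).Reachable ⟨a, ha⟩ ⟨b, hb⟩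

/-- A clique separator. -/
def IsCliqueSeparator (G : SimpleGraph V) (S : Set V) : Prop :=
  G.IsClique S ∧ IsSeparator G S

/-- A graph is prime if it has no clique separator. -/
def IsPrime (G : SimpleGraph V) : Prop := ∀ S : Set V, ¬ IsCliqueSeparator G S

/-- Maximal prime subgraph (given by its vertex set). -/
def IsMPSubgraph (G : SimpleGraph V) (M : Set V) : Prop :=
  IsPrime (G.induce M) ∧ ∀ M' : Set V, M ⊆ M' → IsPrime (G.induce M') → M' = M

/-- Extremal mp-subgraph. -/
def IsExtremalMP (G : SimpleGraph V) (M : Set V) : Prop :=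
  IsMPSubgraph G M ∧ ∃ M', IsMPSubgraph G M' ∧ M' ≠ M ∧
    ∀ M'', IsMPSubgraph G M'' → M'' ≠ M → M ∩ M'' ⊆ M ∩ M'

/-- Vertices of `M` shared with another mp-subgraph. -/
def Sh (G : SimpleGraph V) (M : Set V) : Set V :=
  {v | v ∈ M ∧ ∃ M', IsMPSubgraph G M' ∧ M' ≠ M ∧ v ∈ M'}

/-- Vertices exclusive to `M`. -/
def Exc (G : SimpleGraph V) (M : Set V) : Set V := M \ Sh G M

/-- Induced path: a path with no chords. -/
def IsInducedPath (G : SimpleGraph V) {u v : V} (p : G.Walk u v) : Prop :=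
  p.IsPath ∧ ∀ i j : ℕ, i + 1 < j → j ≤ p.length → ¬ G.Adj (p.getVert i) (p.getVert j)

/-- Monophonic interval. -/
def monoInterval (G : SimpleGraph V) (S : Set V) : Set V :=
  S ∪ {x | ∃ u ∈ S, ∃ w ∈ S, ∃ p : G.Walk u w, IsInducedPath G p ∧ x ∈ p.support}

/-- Monophonically convex set. -/
def MonoConvex (G : SimpleGraph V) (S : Set V) : Prop := monoInterval G S = S

/-- Monophonic hull. -/
def monoHull (G : SimpleGraph V) (S : Set V) : Set V :=
  ⋂₀ {T : Set V | S ⊆ T ∧ MonoConvex G T}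

lemma mem_closedNbhd_iff {G : SimpleGraph V} {u x : V} :
    x ∈ closedNbhd G u ↔ x = u ∨ G.Adj u x := by
  simp [closedNbhd]

lemma memSc_iff {G : SimpleGraph V} {u w vu vw x : V} :
    x ∈ ((((closedNbhd G u) \ {vu}) ∪ ((closedNbhd G w) \ {vw}))ᶜ : Set V) ↔
      (x ∉ closedNbhd G u ∨ x = vu) ∧ (x ∉ closedNbhd G w ∨ x = vw) := by
  simp only [Set.mem_compl_iff, Set.mem_union, Set.mem_diff, Set.mem_singleton_iff]
  tauto

/-- characterization of vertices on weakly toll (u,w)-walks via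
connected components after removing `S(v_u, v_w) = (N[u] \ {v_u}) ∪ (N[w] \ {v_w})`. -/
theorem stmt0 [Fintype V] [DecidableEq V] (G : SimpleGraph V) (u v w : V)
    (huv : u ≠ v) (huw : u ≠ w) (hvw : v ≠ w) (hnadj : ¬ G.Adj u w) :
    (∃ p : G.Walk u w, IsWeaklyTollWalk G p ∧ v ∈ p.support) ↔
    ∃ vu ∈ G.neighborSet u, ∃ vw ∈ G.neighborSet w,
      ∃ (h1 : vu ∈ ((((closedNbhd G u) \ {vu}) ∪ ((closedNbhd G w) \ {vw}))ᶜ : Set V))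
        (h2 : vw ∈ ((((closedNbhd G u) \ {vu}) ∪ ((closedNbhd G w) \ {vw}))ᶜ : Set V))
        (h3 : v ∈ ((((closedNbhd G u) \ {vu}) ∪ ((closedNbhd G w) \ {vw}))ᶜ : Set V)),
        (G.induce ((((closedNbhd G u) \ {vu}) ∪ ((closedNbhd G w) \ {vw}))ᶜ : Set V)).Reachable
          ⟨vu, h1⟩ ⟨vw, h2⟩ ∧
        (G.induce ((((closedNbhd G u) \ {vu}) ∪ ((closedNbhd G w) \ {vw}))ᶜ : Set V)).Reachable
          ⟨vu, h1⟩ ⟨v, h3⟩ := by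
  constructor
  · rintro ⟨p, ⟨hne, hnadj', hu, hw⟩, hv⟩
    set vu := p.getVert 1 with hvu_def
    set vw := p.getVert (p.length - 1) with hvw_def
    have hlen : 2 ≤ p.length := by
      rcases Nat.lt_or_ge p.length 2 with h | h
      · interval_cases h' : p.length
        · exact absurd (Walk.eq_of_length_eq_zero h') huw
        · exfalso
          have := p.adj_getVert_succ (i := 0) (by omega)
          rw [p.getVert_zero] at this
          have h1 : p.getVert 1 = w := by
            have := p.getVert_length
            rwa [h'] at this
          exact hnadj (h1 ▸ this)
      · exact h
    have hadj_uvu : G.Adj u vu := by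
      have := p.adj_getVert_succ (i := 0) (by omega)
      rwa [p.getVert_zero] at this
    have hadj_vww : G.Adj vw w := by
      have := p.adj_getVert_succ (i := p.length - 1) (by omega)
      have h2 : p.length - 1 + 1 = p.length := by omega
      rw [h2, p.getVert_length] at this
      exact this
    have hvuneu : vu ≠ u := fun h => G.irrefl (h ▸ hadj_uvu)
    have hvunew : vu ≠ w := fun h => hnadj (h ▸ hadj_uvu)
    have hvwnew : vw ≠ w := G.ne_of_adj hadj_vww
    have hvwneu : vw ≠ u := fun h => hnadj (h ▸ hadj_vww)
    set Sc := ((((closedNbhd G u) \ {vu}) ∪ ((closedNbhd G w) \ {vw}))ᶜ : Set V) with hSc_def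
    have memSc : ∀ x ∈ p.support, x ≠ u → x ≠ w → x ∈ Sc := by
      intro x hx hxu hxw
      rw [hSc_def, memSc_iff]
      constructor
      · by_cases h : G.Adj u x
        · exact Or.inr (hu x hx h)
        · exact Or.inl (by rw [mem_closedNbhd_iff]; tauto)
      · by_cases h : G.Adj x w
        · exact Or.inr (hw x hx h)
        · exact Or.inl (by rw [mem_closedNbhd_iff]; push_neg; exact ⟨hxw, fun h' => h h'.symm⟩)
    have hmemsup : ∀ i, i ≤ p.length → p.getVert i ∈ p.support := by
      intro i hi
      exact Walk.mem_support_iff_exists_getVert.mpr ⟨i, rfl, hi⟩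
    have hvuS : vu ∈ Sc := memSc vu (hmemsup 1 (by omega)) hvuneu hvunew
    have hvwS : vw ∈ Sc := memSc vw (hmemsup (p.length - 1) (by omega)) hvwneu hvwnew
    have key : ∀ i, 1 ≤ i → i ≤ p.length - 1 →
        p.getVert i = u ∨ p.getVert i = w ∨
          ∃ h : p.getVert i ∈ Sc,
            (G.induce Sc).Reachable ⟨vu, hvuS⟩ ⟨p.getVert i, h⟩ := by
      intro i
      induction i using Nat.strong_induction_on with
      | _ i ih =>
        intro h1 h2
        match i, h1 with
        | 1, _ =>
          right; right
          exact ⟨hvuS, Reachable.refl _⟩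
        | (j+2), _ =>
          have hadj : G.Adj (p.getVert (j+1)) (p.getVert (j+2)) :=
            p.adj_getVert_succ (by omega)
          have hsup2 : p.getVert (j+2) ∈ p.support := hmemsup _ (by omega)
          rcases ih (j+1) (by omega) (by omega) (by omega) with hpu | hpw | ⟨hmem, hreach⟩
          · right; right
            have hadj' : G.Adj u (p.getVert (j+2)) := by have h' := hadj; rw [hpu] at h'; exact h'
            have heq : p.getVert (j+2) = vu := hu _ hsup2 hadj'
            rw [heq]
            exact ⟨hvuS, Reachable.refl _⟩
          · have hadj' : G.Adj (p.getVert (j+2)) w := by have h' := hadj.symm; rw [hpw] at h'; exact h'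
            have h2v : p.getVert (j+2) = vw := hw _ hsup2 hadj'
            have hadj0 : G.Adj (p.getVert j) (p.getVert (j+1)) :=
              p.adj_getVert_succ (by omega)
            have hadj0' : G.Adj (p.getVert j) w := by have h' := hadj0; rw [hpw] at h'; exact h'
            have hjv : p.getVert j = vw := hw _ (hmemsup j (by omega)) hadj0'
            have hj1 : 1 ≤ j := by
              rcases Nat.eq_zero_or_pos j with h0 | h
              · exfalso
                apply hvwneu
                rw [← hjv, h0, p.getVert_zero]
              · exact h
            rcases ih j (by omega) hj1 (by omega) with hju | hjw | ⟨hm, hr⟩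
            · exact absurd (hju.symm.trans hjv).symm hvwneu
            · exact absurd (hjw.symm.trans hjv).symm hvwnew
            · right; right
              rw [h2v, ← hjv]
              exact ⟨hm, hr⟩
          · by_cases hcu : p.getVert (j+2) = u
            · exact Or.inl hcu
            by_cases hcw : p.getVert (j+2) = w
            · exact Or.inr (Or.inl hcw)
            have hm2 : p.getVert (j+2) ∈ Sc := memSc _ hsup2 hcu hcw
            right; right
            refine ⟨hm2, hreach.trans (Adj.reachable ?_)⟩
            show (G.induce Sc).Adj ⟨_, hmem⟩ ⟨_, hm2⟩
            simpa using hadj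
    have hreach_vw : (G.induce Sc).Reachable ⟨vu, hvuS⟩ ⟨vw, hvwS⟩ := by
      rcases key (p.length - 1) (by omega) le_rfl with h | h | ⟨hm, hr⟩
      · exact absurd h hvwneu
      · exact absurd h hvwnew
      · exact hr
    obtain ⟨iv, hiv, hivle⟩ := Walk.mem_support_iff_exists_getVert.mp hv
    have hiv1 : 1 ≤ iv := by
      rcases Nat.eq_zero_or_pos iv with h0 | h
      · exfalso; apply huv; rw [← hiv, h0, p.getVert_zero]
      · exact h
    have hiv2 : iv ≤ p.length - 1 := by
      rcases Nat.lt_or_ge iv p.length with h | h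
      · omega
      · exfalso; apply hvw; rw [← hiv, p.getVert_of_length_le h]
    have hvS : v ∈ Sc := memSc v hv (Ne.symm huv) hvw
    have hreach_v : (G.induce Sc).Reachable ⟨vu, hvuS⟩ ⟨v, hvS⟩ := by
      rcases key iv hiv1 hiv2 with h | h | ⟨hm, hr⟩
      · rw [hiv] at h; exact absurd h.symm huv
      · rw [hiv] at h; exact absurd h hvw
      · have heq : (⟨p.getVert iv, hm⟩ : ↥Sc) = ⟨v, hvS⟩ := Subtype.ext hiv
        exact heq ▸ hr
    exact ⟨vu, hadj_uvu, vw, hadj_vww.symm, hvuS, hvwS, hvS, hreach_vw, hreach_v⟩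
  · rintro ⟨vu, hvu, vw, hvw, h1, h2, h3, hr1, hr2⟩
    have hadj_uvu : G.Adj u vu := hvu
    have hadj_wvw : G.Adj w vw := hvw
    set Sc := ((((closedNbhd G u) \ {vu}) ∪ ((closedNbhd G w) \ {vw}))ᶜ : Set V) with hSc_def
    obtain ⟨q2⟩ := hr1
    obtain ⟨q1⟩ := hr2
    let f : G.induce Sc →g G := (SimpleGraph.Embedding.induce Sc).toHom
    let q1' : G.Walk vu v := q1.map f
    let q2' : G.Walk vu vw := q2.map f
    let inner : G.Walk vu vw := (q1'.append q1'.reverse).append q2'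
    let big : G.Walk u w := Walk.cons hadj_uvu (inner.concat hadj_wvw.symm)
    have hinnerS : ∀ x ∈ inner.support, x ∈ Sc := by
      intro x hx
      have : x ∈ q1'.support ∨ x ∈ q2'.support := by
        simp only [inner, Walk.mem_support_append_iff, Walk.support_reverse,
          List.mem_reverse] at hx
        tauto
      rcases this with h | h <;>
      · simp only [q1', q2'] at h
        erw [Walk.support_map, List.mem_map] at h
        obtain ⟨y, _, rfl⟩ := h
        exact y.2
    have hbigsup : big.support = u :: (inner.support.concat w) := by
      simp [big, Walk.support_concat]
    have hget1 : big.getVert 1 = vu := Walk.getVert_cons_succ _ _ |>.trans (Walk.getVert_zero _)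
    have hbiglen : big.length = inner.length + 2 := by
      simp [big, Walk.length_concat]
    have hgetlast : big.getVert (big.length - 1) = vw := by
      rw [hbiglen]
      show (Walk.cons hadj_uvu (inner.concat hadj_wvw.symm)).getVert (inner.length + 1) = vw
      rw [Walk.getVert_cons_succ, Walk.concat_eq_append, Walk.getVert_append]
      simp
    have hmemu : ∀ x ∈ big.support, G.Adj u x → x = big.getVert 1 := by
      intro x hx hadj
      rw [hget1]
      rw [hbigsup] at hx
      simp only [List.mem_cons, List.concat_eq_append, List.mem_append, List.mem_singleton, List.not_mem_nil, or_false] at hx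
      rcases hx with rfl | hx | rfl
      · exact absurd hadj (G.irrefl)
      · have hxS := hinnerS x hx
        rw [hSc_def, memSc_iff] at hxS
        rcases hxS.1 with h | h
        · exact absurd (mem_closedNbhd_iff.mpr (Or.inr hadj)) h
        · exact h
      · exact absurd hadj hnadj
    have hmemw : ∀ x ∈ big.support, G.Adj x w → x = big.getVert (big.length - 1) := by
      intro x hx hadj
      rw [hgetlast]
      rw [hbigsup] at hx
      simp only [List.mem_cons, List.concat_eq_append, List.mem_append, List.mem_singleton, List.not_mem_nil, or_false] at hx
      rcases hx with rfl | hx | rfl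
      · exact absurd hadj hnadj
      · have hxS := hinnerS x hx
        rw [hSc_def, memSc_iff] at hxS
        rcases hxS.2 with h | h
        · exact absurd (mem_closedNbhd_iff.mpr (Or.inr hadj.symm)) h
        · exact h
      · exact absurd hadj (G.irrefl)
    refine ⟨big, ⟨huw, hnadj, hmemu, hmemw⟩, ?_⟩
    rw [hbigsup]
    simp only [List.mem_cons, List.concat_eq_append, List.mem_append, List.mem_singleton, List.not_mem_nil, or_false]
    right; left
    have : v ∈ q1'.support := Walk.end_mem_support q1'
    simp only [inner, Walk.mem_support_append_iff]
    tauto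
end

section
/- Let G be a connected non-complete graph and let u, v ∈ V(G) maximize |I(u,v)| over all pairs of vertices. Then every vertex of V(G) \ I(u,v) is adjacent to u or to v, and no vertex of V(G) \ I(u,v) is adjacent to both u and v. -/
open SimpleGraph

variable {V : Type*}

section Aux
variable {G : SimpleGraph V}
open SimpleGraph Walk

lemma wt_length_pos {a b : V} (p : G.Walk a b) (h : a ≠ b) : 0 < p.length := by
  cases p with
  | nil => exact absurd rfl h
  | cons h q => simp

lemma wt_getVert_one_append {a b c : V} (p : G.Walk a b) (q : G.Walk b c)
    (hp : 0 < p.length) : (p.append q).getVert 1 = p.getVert 1 := by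
  rw [Walk.getVert_append]
  rcases Nat.lt_or_ge 1 p.length with h | h
  · simp [h]
  · have h1 : p.length = 1 := by omega
    rw [if_neg (by omega), h1, Nat.sub_self, Walk.getVert_zero, ← h1, Walk.getVert_length]

lemma wt_penult_append {a b c : V} (p : G.Walk a b) (q : G.Walk b c)
    (hq : 0 < q.length) :
    (p.append q).getVert ((p.append q).length - 1) = q.getVert (q.length - 1) := by
  rw [Walk.length_append, Walk.getVert_append, if_neg (by omega)]
  congr 1
  omega

lemma wt_reverse {a b : V} {p : G.Walk a b} (h : IsWeaklyTollWalk G p) :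
    IsWeaklyTollWalk G p.reverse := by
  obtain ⟨hne, hna, hs, he⟩ := h
  have hl : 0 < p.length := wt_length_pos p hne
  refine ⟨hne.symm, fun hadj => hna hadj.symm, ?_, ?_⟩
  · intro x hx hadj
    rw [Walk.getVert_reverse]
    exact he x (by simpa using hx) hadj.symm
  · intro x hx hadj
    rw [Walk.length_reverse, Walk.getVert_reverse,
      show p.length - (p.length - 1) = 1 by omega]
    exact hs x (by simpa using hx) hadj.symm

lemma wt_tamed [DecidableEq V] (A : V → Prop) {a b : V}
    (h : ∃ p : G.Walk a b, ∀ x ∈ p.support, A x) :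
    ∃ p : G.Walk a b, (∀ x ∈ p.support, A x) ∧
      (∀ x ∈ p.support, G.Adj a x → x = p.getVert 1) ∧
      (∀ x ∈ p.support, G.Adj x b → x = p.getVert (p.length - 1)) := by
  classical
  set S : Set ℕ := {n | ∃ p : G.Walk a b, p.length = n ∧ ∀ x ∈ p.support, A x} with hSdef
  have hS : S.Nonempty := by obtain ⟨p, hp⟩ := h; exact ⟨p.length, p, rfl, hp⟩
  obtain ⟨p, hlen, hA⟩ := Nat.sInf_mem hS
  have hsplitlen : ∀ (x) (hx : x ∈ p.support),
      (p.takeUntil x hx).length + (p.dropUntil x hx).length = p.length := by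
    intro x hx
    rw [← Walk.length_append, Walk.take_spec]
  refine ⟨p, hA, ?_, ?_⟩
  · intro x hx hadj
    have hxa : x ≠ a := fun hh => G.irrefl (hh ▸ hadj)
    have hle : sInf S ≤ 1 + (p.dropUntil x hx).length := by
      apply Nat.sInf_le
      refine ⟨Walk.cons hadj (p.dropUntil x hx), by simp [Nat.add_comm], ?_⟩
      intro z hz
      rw [Walk.support_cons, List.mem_cons] at hz
      rcases hz with rfl | hz
      · exact hA z p.start_mem_support
      · exact hA z (p.support_dropUntil_subset hx hz)
    have htake : 0 < (p.takeUntil x hx).length := wt_length_pos _ (Ne.symm hxa)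
    have h1 : (p.takeUntil x hx).length = 1 := by
      have := hsplitlen x hx; omega
    have := Walk.getVert_append (p.takeUntil x hx) (p.dropUntil x hx) 1
    rw [Walk.take_spec, h1, if_neg (by omega), Nat.sub_self, Walk.getVert_zero] at this
    exact this.symm
  · intro x hx hadj
    have hxb : x ≠ b := fun hh => G.irrefl (hh ▸ hadj)
    have hle : sInf S ≤ (p.takeUntil x hx).length + 1 := by
      apply Nat.sInf_le
      refine ⟨(p.takeUntil x hx).append (Walk.cons hadj Walk.nil),
        by rw [Walk.length_append]; simp, ?_⟩
      intro z hz
      rw [Walk.mem_support_append_iff] at hz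
      rcases hz with hz | hz
      · exact hA z (p.support_takeUntil_subset hx hz)
      · simp only [Walk.support_cons, Walk.support_nil, List.mem_cons,
          List.mem_singleton] at hz
        rcases hz with rfl | hz
        · exact hA z hx
        · rcases hz with rfl | h; exacts [hA _ p.end_mem_support, absurd h List.not_mem_nil]
    have hdrop : 0 < (p.dropUntil x hx).length := wt_length_pos _ hxb
    have h1 : (p.dropUntil x hx).length = 1 := by
      have := hsplitlen x hx; omega
    have := Walk.getVert_append (p.takeUntil x hx) (p.dropUntil x hx) (p.length - 1)
    rw [Walk.take_spec] at this
    rw [this, if_neg (by have := hsplitlen x hx; omega),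
      show p.length - 1 - (p.takeUntil x hx).length = 0 by have := hsplitlen x hx; omega,
      Walk.getVert_zero]

lemma wt_detour [DecidableEq V] {u v w z : V} {p : G.Walk u v}
    (hp : IsWeaklyTollWalk G p) (hz : z ∈ p.support) (hzw : G.Adj z w)
    (hu : ¬ G.Adj u w) (hv : ¬ G.Adj v w) :
    ∃ q : G.Walk u v, IsWeaklyTollWalk G q ∧ w ∈ q.support ∧
      ∀ x ∈ q.support, x ∈ p.support ∨ x = w := by
  obtain ⟨hne, hna, hs, he⟩ := hp
  have hzu : z ≠ u := by rintro rfl; exact hu hzw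
  have hzv : z ≠ v := by rintro rfl; exact hv hzw
  set T := p.takeUntil z hz with hT
  set D := p.dropUntil z hz with hD
  have hsplit : T.append D = p := p.take_spec hz
  have hTl : 0 < T.length := wt_length_pos _ (Ne.symm hzu)
  have hDl : 0 < D.length := wt_length_pos _ hzv
  set Q : G.Walk z v := Walk.cons hzw (Walk.cons hzw.symm D) with hQ
  set q : G.Walk u v := T.append Q with hq
  have hmem : ∀ x ∈ q.support, x ∈ p.support ∨ x = w := by
    intro x hx
    rw [hq, Walk.mem_support_append_iff] at hx
    rcases hx with hx | hx
    · exact Or.inl (hsplit ▸ (Walk.subset_support_append_left _ _ hx))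
    · rw [hQ] at hx
      simp only [Walk.support_cons, List.mem_cons] at hx
      rcases hx with rfl | rfl | hx
      · exact Or.inl hz
      · exact Or.inr rfl
      · exact Or.inl (hsplit ▸ (Walk.subset_support_append_right _ _ hx))
  have hg1 : q.getVert 1 = p.getVert 1 := by
    rw [hq, wt_getVert_one_append _ _ hTl, ← hsplit, wt_getVert_one_append _ _ hTl]
  have hQl : 0 < Q.length := by rw [hQ]; simp
  obtain ⟨m, hm⟩ : ∃ m, D.length = m + 1 := ⟨D.length - 1, by omega⟩
  have hQpen : Q.getVert (Q.length - 1) = D.getVert (D.length - 1) := by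
    rw [hQ]
    simp only [Walk.length_cons]
    rw [show D.length + 1 + 1 - 1 = D.length + 1 from rfl, Walk.getVert_cons_succ, hm,
      Walk.getVert_cons_succ]
    congr 1
  have hgp : q.getVert (q.length - 1) = p.getVert (p.length - 1) := by
    rw [hq, wt_penult_append _ _ hQl, hQpen, ← hsplit, wt_penult_append _ _ hDl]
  refine ⟨q, ⟨hne, hna, ?_, ?_⟩, ?_, hmem⟩
  · intro x hx hadj
    rcases hmem x hx with hx' | rfl
    · rw [hg1]; exact hs x hx' hadj
    · exact absurd hadj hu
  · intro x hx hadj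
    rcases hmem x hx with hx' | rfl
    · rw [hgp]; exact he x hx' hadj
    · exact absurd hadj.symm hv
  · rw [hq, Walk.mem_support_append_iff, hQ]
    right
    simp

end Aux

/-- if `u,v` maximize the size of the weakly toll interval in a
connected non-complete graph, then every vertex outside `I(u,v)` is adjacent to
`u` or to `v`, but not to both. -/
theorem stmt11 [Fintype V] (G : SimpleGraph V) (hconn : G.Connected)
    (hnc : ∃ a b : V, a ≠ b ∧ ¬ G.Adj a b) (u v : V)
    (hmax : ∀ w z : V, (wtInterval G {w, z}).ncard ≤ (wtInterval G {u, v}).ncard) :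
    ∀ y : V, y ∉ wtInterval G {u, v} →
      (G.Adj u y ∨ G.Adj v y) ∧ ¬ (G.Adj u y ∧ G.Adj v y) := by
  classical
  intro y hy
  set I := wtInterval G {u, v} with hIdef
  have intro1 : ∀ (S : Set V) (x : V), x ∈ S → x ∈ wtInterval G S :=
    fun S x h => Set.mem_union_left _ h
  have intro2 : ∀ (S : Set V) (x a : V), a ∈ S → ∀ b : V, b ∈ S →
      ∀ p : G.Walk a b, IsWeaklyTollWalk G p → x ∈ p.support → x ∈ wtInterval G S :=
    fun S x a ha b hb p hp hx => Set.mem_union_right _ ⟨a, ha, b, hb, p, hp, hx⟩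
  have elim0 : ∀ (S : Set V) (x : V), x ∈ wtInterval G S → x ∈ S ∨
      ∃ a ∈ S, ∃ b ∈ S, ∃ p : G.Walk a b, IsWeaklyTollWalk G p ∧ x ∈ p.support :=
    fun S x h => h
  have huI : u ∈ I := intro1 _ u (by simp)
  have hvI : v ∈ I := intro1 _ v (by simp)
  have h3 : 3 ≤ I.ncard := by
    obtain ⟨a, b, hab, hnab⟩ := hnc
    obtain ⟨p0⟩ := hconn.preconnected a b
    obtain ⟨q0, -, hq0s, hq0e⟩ := wt_tamed (G := G) (fun _ => True) ⟨p0, fun _ _ => trivial⟩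
    have hq0toll : IsWeaklyTollWalk G q0 := ⟨hab, hnab, hq0s, hq0e⟩
    have hq0len : 0 < q0.length := wt_length_pos q0 hab
    have hac : G.Adj a (q0.getVert 1) := by
      have h := q0.adj_getVert_succ (i := 0) hq0len
      simpa using h
    have hsub : ({a, q0.getVert 1, b} : Set V) ⊆ wtInterval G {a, b} := by
      intro x hx
      rcases hx with rfl | rfl | rfl
      · exact intro1 _ _ (by simp)
      · refine intro2 _ _ a (by simp) b (by simp) q0 hq0toll ?_
        rw [Walk.mem_support_iff_exists_getVert]
        exact ⟨1, rfl, by omega⟩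
      · exact intro1 _ _ (by simp)
    have hne1 : a ≠ q0.getVert 1 := fun h => G.irrefl (by rwa [← h] at hac)
    have hne2 : q0.getVert 1 ≠ b := fun h => hnab (by rwa [h] at hac)
    have hcard : ({a, q0.getVert 1, b} : Set V).ncard = 3 := by
      rw [Set.ncard_insert_of_notMem (by simp [hne1, hab]) (Set.toFinite _),
        Set.ncard_pair hne2]
    calc (3:ℕ) = ({a, q0.getVert 1, b} : Set V).ncard := hcard.symm
      _ ≤ (wtInterval G {a, b}).ncard := Set.ncard_le_ncard hsub (Set.toFinite _)
      _ ≤ I.ncard := hmax a b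
  have huv : u ≠ v := by
    rintro rfl
    have hsub : I ⊆ {u} := by
      intro x hx
      rcases elim0 _ x hx with hx | ⟨a', ha', b', hb', p, hp, -⟩
      · simpa using hx
      · simp only [Set.mem_insert_iff, Set.mem_singleton_iff, or_self] at ha' hb'
        subst ha'; subst hb'
        exact absurd rfl hp.1
    have hle := Set.ncard_le_ncard hsub (Set.toFinite _)
    rw [Set.ncard_singleton] at hle
    omega
  have hnuv : ¬ G.Adj u v := by
    intro hadj
    have hsub : I ⊆ {u, v} := by
      intro x hx
      rcases elim0 _ x hx with hx | ⟨a', ha', b', hb', p, hp, -⟩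
      · exact hx
      · exfalso
        simp only [Set.mem_insert_iff, Set.mem_singleton_iff] at ha' hb'
        rcases ha' with rfl | rfl <;> rcases hb' with rfl | rfl
        · exact hp.1 rfl
        · exact hp.2.1 hadj
        · exact hp.2.1 hadj.symm
        · exact hp.1 rfl
    have hle := Set.ncard_le_ncard hsub (Set.toFinite _)
    have h2 : ({u, v} : Set V).ncard ≤ 2 :=
      le_trans (Set.ncard_insert_le _ _) (by rw [Set.ncard_singleton])
    omega
  set J : Set V := {x | ∃ p : G.Walk u v, IsWeaklyTollWalk G p ∧ x ∈ p.support} with hJdef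
  have hJI : J ⊆ I := by
    rintro x ⟨p, hp, hxp⟩
    exact intro2 _ x u (by simp) v (by simp) p hp hxp
  have hmemJ : ∀ x ∈ I, x = u ∨ x = v ∨ x ∈ J := by
    intro x hx
    rcases elim0 _ x hx with hx | ⟨a', ha', b', hb', p, hp, hxp⟩
    · simp only [Set.mem_insert_iff, Set.mem_singleton_iff] at hx
      tauto
    · simp only [Set.mem_insert_iff, Set.mem_singleton_iff] at ha' hb'
      rcases ha' with rfl | rfl <;> rcases hb' with rfl | rfl
      · exact absurd rfl hp.1
      · exact Or.inr (Or.inr ⟨p, hp, hxp⟩)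
      · exact Or.inr (Or.inr ⟨p.reverse, wt_reverse hp, by simpa using hxp⟩)
      · exact absurd rfl hp.1
  have hW : ∃ p : G.Walk u v, IsWeaklyTollWalk G p := by
    by_contra hno
    push_neg at hno
    have hsub : I ⊆ {u, v} := by
      intro x hx
      rcases hmemJ x hx with rfl | rfl | ⟨p, hp, -⟩
      · exact Set.mem_insert _ _
      · exact Set.mem_insert_of_mem _ rfl
      · exact absurd hp (hno p)
    have hle := Set.ncard_le_ncard hsub (Set.toFinite _)
    have h2 : ({u, v} : Set V).ncard ≤ 2 :=
      le_trans (Set.ncard_insert_le _ _) (by rw [Set.ncard_singleton])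
    omega
  obtain ⟨W0, hW0⟩ := hW
  have huJ : u ∈ J := ⟨W0, hW0, W0.start_mem_support⟩
  have hvJ : v ∈ J := ⟨W0, hW0, W0.end_mem_support⟩
  have hmid : ∀ (w' : V) (h1 : G.Adj u w') (h2 : G.Adj w' v),
      IsWeaklyTollWalk G (Walk.cons h1 (Walk.cons h2 Walk.nil)) := by
    intro w' h1 h2
    refine ⟨huv, hnuv, ?_, ?_⟩
    · intro x hx hadj
      simp at hx
      rcases hx with rfl | rfl | rfl
      · exact absurd hadj (G.irrefl)
      · rfl
      · exact absurd hadj hnuv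
    · intro x hx hadj
      simp at hx
      rcases hx with rfl | rfl | rfl
      · exact absurd hadj hnuv
      · rfl
      · exact absurd hadj (G.irrefl)
  have hnotboth : ¬ (G.Adj u y ∧ G.Adj v y) := by
    rintro ⟨h1, h2⟩
    exact hy (hJI ⟨Walk.cons h1 (Walk.cons h2.symm Walk.nil), hmid y h1 h2.symm, by simp⟩)
  refine ⟨?_, hnotboth⟩
  by_contra hnadj
  push_neg at hnadj
  obtain ⟨hnuy, hnvy⟩ := hnadj
  set avoidP : V → Prop := fun x => ¬ G.Adj u x ∧ ¬ G.Adj v x with havdef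
  set C : V → Prop := fun x => ∃ p : G.Walk y x, ∀ z ∈ p.support, avoidP z with hCdef
  have hyC : C y := by
    refine ⟨Walk.nil, ?_⟩
    intro z hz
    simp only [Walk.support_nil, List.mem_singleton] at hz
    subst hz
    exact ⟨hnuy, hnvy⟩
  have hJprop : ∀ x w', x ∈ J → G.Adj x w' → ¬ G.Adj u w' → ¬ G.Adj v w' → w' ∈ J := by
    rintro x w' ⟨p, hp, hxp⟩ hadj h1 h2
    obtain ⟨q, hq, hwq, -⟩ := wt_detour hp hxp hadj h1 h2
    exact ⟨q, hq, hwq⟩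
  have hCJ : ∀ (s x : V) (p : G.Walk s x), (∀ z ∈ p.support, avoidP z) → x ∈ J → s ∈ J := by
    intro s x p
    induction p with
    | nil => exact fun _ h => h
    | @cons a d e h q ih =>
      intro hav hx
      have hdJ := ih (fun z hz => hav z (by simp [hz])) hx
      have havs := hav a (Walk.start_mem_support _)
      exact hJprop d a hdJ h.symm havs.1 havs.2
  have hCavoid : ∀ x, C x → avoidP x := by
    rintro x ⟨p, hp⟩
    exact hp x p.end_mem_support
  have hCnotJ : ∀ x, C x → x ∉ J := by
    rintro x ⟨p, hp⟩ hxJ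
    exact hy (hJI (hCJ y x p hp hxJ))
  have hCbd : ∀ z c, z ∈ J → C c → ¬ G.Adj z c := fun z c hz hc hadj =>
    hCnotJ c hc (hJprop z c hz hadj (hCavoid c hc).1 (hCavoid c hc).2)
  have hNyJ : ∀ z ∈ J, ¬ G.Adj z y := fun z hz => hCbd z y hz hyC
  have hunotC : ¬ C u := fun h => hCnotJ u h huJ
  have hCext : ∀ c d, C c → G.Adj c d → ¬ G.Adj u d → ¬ G.Adj v d → C d := by
    rintro c d ⟨p, hp⟩ hadj h1 h2
    refine ⟨p.append (Walk.cons hadj Walk.nil), ?_⟩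
    intro z hz
    rw [Walk.mem_support_append_iff] at hz
    rcases hz with hz | hz
    · exact hp z hz
    · simp at hz
      rcases hz with rfl | rfl
      · exact hp _ p.end_mem_support
      · exact ⟨h1, h2⟩
  have hexit : ∀ (s e : V) (p : G.Walk s e), C s → ¬ C e →
      ∃ c t, C c ∧ G.Adj c t ∧ ¬ avoidP t := by
    intro s e p
    induction p with
    | nil => exact fun h hne => absurd h hne
    | @cons a d e h q ih =>
      intro hs hne
      by_cases hav : avoidP d
      · exact ih (hCext a d hs h hav.1 hav.2) hne
      · exact ⟨a, d, hs, h, hav⟩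
  obtain ⟨py⟩ := hconn.preconnected y u
  obtain ⟨c, t, hcC, hct, hnavt⟩ := hexit y u py hyC hunotC
  have htuv : G.Adj u t ∨ G.Adj v t := by
    by_contra hcon
    push_neg at hcon
    exact hnavt ⟨hcon.1, hcon.2⟩
  have hnotbotht : ¬ (G.Adj u t ∧ G.Adj v t) := by
    rintro ⟨h1, h2⟩
    have htJ : t ∈ J := ⟨Walk.cons h1 (Walk.cons h2.symm Walk.nil), hmid t h1 h2.symm, by simp⟩
    exact hCbd t c htJ hcC hct.symm
  have hA0 : ∃ p : G.Walk y t, ∀ x ∈ p.support, x = t ∨ avoidP x := by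
    obtain ⟨pc, hpc⟩ := hcC
    refine ⟨pc.append (Walk.cons hct Walk.nil), ?_⟩
    intro z hz
    rw [Walk.mem_support_append_iff] at hz
    rcases hz with hz | hz
    · exact Or.inr (hpc z hz)
    · simp at hz
      rcases hz with rfl | rfl
      · exact Or.inr (hpc _ pc.end_mem_support)
      · exact Or.inl rfl
  obtain ⟨P, hPA, hPs, -⟩ := wt_tamed (fun x => x = t ∨ avoidP x) hA0
  have hyt : y ≠ t := by
    rintro rfl
    rcases htuv with h | h
    · exact hnuy h
    · exact hnvy h
  have hPlen : 0 < P.length := wt_length_pos P hyt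
  have hyne_v : y ≠ v := by rintro rfl; exact hy hvI
  have hyne_u : y ≠ u := by rintro rfl; exact hy huI
  have hnyv : ¬ G.Adj y v := fun h => hnvy h.symm
  rcases htuv with htu | htv
  · -- Case A : t adjacent to u, not to v
    have htv : ¬ G.Adj v t := fun h => hnotbotht ⟨htu, h⟩
    have hstep : ∀ x ∈ J, x ∈ wtInterval G {y, v} := by
      rintro x ⟨Wx, hWx, hxW⟩
      have hWxlen : 0 < Wx.length := wt_length_pos Wx huv
      set Rx : G.Walk y v := P.append (Walk.cons htu.symm Wx) with hRx
      have hg1 : Rx.getVert 1 = P.getVert 1 := wt_getVert_one_append _ _ hPlen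
      have hpen : Rx.getVert (Rx.length - 1) = Wx.getVert (Wx.length - 1) := by
        rw [hRx, wt_penult_append _ _ (by rw [Walk.length_cons]; omega)]
        obtain ⟨m, hm⟩ : ∃ m, Wx.length = m + 1 := ⟨Wx.length - 1, by omega⟩
        rw [Walk.length_cons, Nat.add_sub_cancel, hm, Walk.getVert_cons_succ]
        congr 1
      refine intro2 _ x y (by simp) v (by simp) Rx ⟨hyne_v, hnyv, ?_, ?_⟩ ?_
      · intro z hz hadj
        rw [hg1]
        rw [hRx, Walk.mem_support_append_iff] at hz
        rcases hz with hz | hz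
        · exact hPs z hz hadj
        · simp only [Walk.support_cons, List.mem_cons] at hz
          rcases hz with rfl | hz
          · exact hPs z P.end_mem_support hadj
          · exact absurd hadj.symm (hNyJ z ⟨Wx, hWx, hz⟩)
      · intro z hz hadj
        rw [hpen]
        rw [hRx, Walk.mem_support_append_iff] at hz
        rcases hz with hz | hz
        · rcases hPA z hz with rfl | hav
          · exact absurd hadj.symm htv
          · exact absurd hadj.symm hav.2
        · simp only [Walk.support_cons, List.mem_cons] at hz
          rcases hz with rfl | hz
          · exact absurd hadj.symm htv
          · exact hWx.2.2.2 z hz hadj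
      · rw [hRx, Walk.mem_support_append_iff]
        right
        simp only [Walk.support_cons, List.mem_cons]
        exact Or.inr hxW
    have hsub : insert y I ⊆ wtInterval G {y, v} := by
      intro x hx
      rcases hx with rfl | hx
      · exact intro1 _ _ (by simp)
      · rcases hmemJ x hx with rfl | rfl | hxJ
        · exact hstep _ huJ
        · exact intro1 _ _ (by simp)
        · exact hstep x hxJ
    have hlt : I.ncard < (wtInterval G {y, v}).ncard := by
      have h1 : I.ncard < (insert y I).ncard := by
        rw [Set.ncard_insert_of_notMem hy (Set.toFinite _)]
        omega
      exact lt_of_lt_of_le h1 (Set.ncard_le_ncard hsub (Set.toFinite _))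
    exact absurd (hmax y v) (not_le.mpr hlt)
  · -- Case B : t adjacent to v, not to u
    have htu : ¬ G.Adj u t := fun h => hnotbotht ⟨h, htv⟩
    have hstep : ∀ x ∈ J, x ∈ wtInterval G {u, y} := by
      rintro x ⟨Wx, hWx, hxW⟩
      have hWxlen : 0 < Wx.length := wt_length_pos Wx huv
      set Rx : G.Walk u y := Wx.append (Walk.cons htv P.reverse) with hRx
      have hg1 : Rx.getVert 1 = Wx.getVert 1 := wt_getVert_one_append _ _ hWxlen
      have hpen : Rx.getVert (Rx.length - 1) = P.getVert 1 := by
        rw [hRx, wt_penult_append _ _ (by rw [Walk.length_cons]; omega)]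
        obtain ⟨m, hm⟩ : ∃ m, P.length = m + 1 := ⟨P.length - 1, by omega⟩
        rw [Walk.length_cons, Walk.length_reverse, Nat.add_sub_cancel, hm,
          Walk.getVert_cons_succ, Walk.getVert_reverse, hm]
        congr 1
        omega
      refine intro2 _ x u (by simp) y (by simp) Rx ⟨Ne.symm hyne_u, hnuy, ?_, ?_⟩ ?_
      · intro z hz hadj
        rw [hg1]
        rw [hRx, Walk.mem_support_append_iff] at hz
        rcases hz with hz | hz
        · exact hWx.2.2.1 z hz hadj
        · simp only [Walk.support_cons, List.mem_cons] at hz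
          rcases hz with rfl | hz
          · exact absurd hadj hnuv
          · have hz' : z ∈ P.support := by simpa using hz
            rcases hPA z hz' with rfl | hav
            · exact absurd hadj htu
            · exact absurd hadj hav.1
      · intro z hz hadj
        rw [hpen]
        rw [hRx, Walk.mem_support_append_iff] at hz
        rcases hz with hz | hz
        · exact absurd hadj (hNyJ z ⟨Wx, hWx, hz⟩)
        · simp only [Walk.support_cons, List.mem_cons] at hz
          rcases hz with rfl | hz
          · exact absurd hadj hnvy
          · exact hPs z (by simpa using hz) hadj.symm
      · rw [hRx, Walk.mem_support_append_iff]
        exact Or.inl hxW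
    have hsub : insert y I ⊆ wtInterval G {u, y} := by
      intro x hx
      rcases hx with rfl | hx
      · exact intro1 _ _ (by simp)
      · rcases hmemJ x hx with rfl | rfl | hxJ
        · exact intro1 _ _ (by simp)
        · exact hstep _ hvJ
        · exact hstep x hxJ
    have hlt : I.ncard < (wtInterval G {u, y}).ncard := by
      have h1 : I.ncard < (insert y I).ncard := by
        rw [Set.ncard_insert_of_notMem hy (Set.toFinite _)]
        omega
      exact lt_of_lt_of_le h1 (Set.ncard_le_ncard hsub (Set.toFinite _))
    exact absurd (hmax u y) (not_le.mpr hlt)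
end

section
/- Let G be a connected non-complete graph and u,v a pair of vertices maximizing |I(u,v)|. If a vertex w of G is a weakly toll extreme vertex of G, then w is a true twin of u or a true twin of v (or equals u or v). -/
open SimpleGraph

variable {V : Type*}

theorem SimpleGraph.Walk.getVert_cons_one {G : SimpleGraph V} {u v w : V} (p : G.Walk v w)
    (h : G.Adj u v) : (Walk.cons h p).getVert 1 = v :=
  (Walk.getVert_cons_succ (n := 0) p h).trans (Walk.getVert_zero p)

namespace WTaux

variable {G : SimpleGraph V}

lemma one_le_length_of_ne {a b : V} (p : G.Walk a b) (h : a ≠ b) : 1 ≤ p.length := by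
  cases p with
  | nil => exact absurd rfl h
  | cons _ _ => simp [Walk.length_cons]

lemma getVert_one_append {a b c : V} (p : G.Walk a b) (q : G.Walk b c) (hp : 1 ≤ p.length) :
    (p.append q).getVert 1 = p.getVert 1 := by
  rw [Walk.getVert_append]
  rcases lt_or_eq_of_le hp with h | h
  · rw [if_pos h]
  · rw [if_neg (by omega)]
    have h1 : q.getVert (1 - p.length) = q.getVert 0 := by rw [← h]
    rw [h1, Walk.getVert_zero, h, Walk.getVert_length]

lemma penult_append {a b c : V} (p : G.Walk a b) (q : G.Walk b c) (hq : 1 ≤ q.length) :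
    (p.append q).getVert ((p.append q).length - 1) = q.getVert (q.length - 1) := by
  rw [Walk.length_append, Walk.getVert_append, if_neg (by omega)]
  congr 1
  omega

lemma penult_cons {a b c : V} (h : G.Adj a b) (p : G.Walk b c) (hp : 1 ≤ p.length) :
    (Walk.cons h p).getVert ((Walk.cons h p).length - 1) = p.getVert (p.length - 1) := by
  rw [Walk.length_cons]
  have h2 : p.length + 1 - 1 = (p.length - 1) + 1 := by omega
  rw [h2, Walk.getVert_cons_succ]

lemma isWT_reverse {a b : V} {p : G.Walk a b} (hp : IsWeaklyTollWalk G p) :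
    IsWeaklyTollWalk G p.reverse := by
  obtain ⟨h1, h2, h3, h4⟩ := hp
  refine ⟨h1.symm, fun h => h2 h.symm, ?_, ?_⟩
  · intro x hx hadj
    rw [Walk.getVert_reverse]
    exact h4 x (by rwa [Walk.support_reverse, List.mem_reverse] at hx) hadj.symm
  · intro x hx hadj
    rw [Walk.getVert_reverse, Walk.length_reverse]
    have h1len : 1 ≤ p.length := one_le_length_of_ne p h1
    have heq : p.length - (p.length - 1) = 1 := by omega
    rw [heq]
    exact h3 x (by rwa [Walk.support_reverse, List.mem_reverse] at hx) hadj.symm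

end WTaux

namespace WTaux

variable {G : SimpleGraph V}

lemma ext_no {w : V} (hw : WTConvex G ({w}ᶜ : Set V)) {a b : V} (ha : a ≠ w) (hb : b ≠ w)
    (p : G.Walk a b) (hp : IsWeaklyTollWalk G p) (hmem : w ∈ p.support) : False := by
  have hmem2 : w ∈ wtInterval G ({w}ᶜ : Set V) :=
    Or.inr ⟨a, by simpa using ha, b, by simpa using hb, p, hp, hmem⟩
  rw [hw] at hmem2
  simp at hmem2

lemma ext_clique {w : V} (hw : WTConvex G ({w}ᶜ : Set V)) {a b : V} (hwa : G.Adj w a)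
    (hwb : G.Adj w b) (hab : a ≠ b) : G.Adj a b := by
  by_contra hnadj
  have hp : IsWeaklyTollWalk G (Walk.cons hwa.symm (Walk.cons hwb Walk.nil)) := by
    refine ⟨hab, hnadj, ?_, ?_⟩
    · intro x hx hadj
      simp [Walk.support_cons] at hx
      rcases hx with rfl | rfl | rfl
      · exact absurd hadj (G.loopless.irrefl _)
      · rfl
      · exact absurd hadj hnadj
    · intro x hx hadj
      simp [Walk.support_cons] at hx
      rcases hx with rfl | rfl | rfl
      · exact absurd hadj hnadj
      · rfl
      · exact absurd hadj (G.loopless.irrefl _)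
  exact ext_no hw hwa.ne' hwb.ne' _ hp (by simp [Walk.support_cons])

lemma ext_notin {w : V} (hw : WTConvex G ({w}ᶜ : Set V)) {a b : V} (ha : a ≠ w) (hb : b ≠ w) :
    w ∉ wtInterval G {a, b} := by
  rintro (h | ⟨c, hc, d, hd, p, hp, hmem⟩)
  · simp at h; rcases h with rfl | rfl
    · exact ha rfl
    · exact hb rfl
  · simp at hc hd
    have hcw : c ≠ w := by rcases hc with rfl | rfl <;> assumption
    have hdw : d ≠ w := by rcases hd with rfl | rfl <;> assumption
    exact ext_no hw hcw hdw p hp hmem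

lemma mem_interval_intro {a b x : V} (p : G.Walk a b) (hp : IsWeaklyTollWalk G p)
    (hx : x ∈ p.support) : x ∈ wtInterval G {a, b} :=
  Or.inr ⟨a, by simp, b, by simp, p, hp, hx⟩

lemma mem_interval_elim {a b x : V} (hx : x ∈ wtInterval G {a, b}) (hxa : x ≠ a) (hxb : x ≠ b) :
    ∃ p : G.Walk a b, IsWeaklyTollWalk G p ∧ x ∈ p.support := by
  rcases hx with h | ⟨c, hc, d, hd, p, hp, hmem⟩
  · simp at h; tauto
  · simp at hc hd
    rcases hc with rfl | rfl <;> rcases hd with rfl | rfl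
    · exact absurd rfl hp.1
    · exact ⟨p, hp, hmem⟩
    · exact ⟨p.reverse, isWT_reverse hp, by simpa [Walk.support_reverse] using hmem⟩
    · exact absurd rfl hp.1

lemma ncard_contra [Fintype V] {u v w a b : V}
    (hmax : ∀ x y : V, (wtInterval G {x, y}).ncard ≤ (wtInterval G {u, v}).ncard)
    (hsub : wtInterval G {u, v} ⊆ wtInterval G {a, b})
    (hwin : w ∈ wtInterval G {a, b}) (hwout : w ∉ wtInterval G {u, v}) : False := by
  have hss : wtInterval G {u, v} ⊂ wtInterval G {a, b} :=
    ⟨hsub, fun h => hwout (h hwin)⟩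
  have h1 := Set.ncard_lt_ncard hss (Set.toFinite _)
  have h2 := hmax a b
  omega

lemma ext_avoid {w : V} (hw : WTConvex G ({w}ᶜ : Set V)) {x y : V}
    (hx1 : ¬ G.Adj w x) (hx2 : x ≠ w) (hy1 : ¬ G.Adj w y) (hy2 : y ≠ w)
    {p : G.Walk x y} (hp : IsWeaklyTollWalk G p) :
    ∀ a ∈ p.support, ¬ G.Adj w a ∧ a ≠ w := by
  intro a ha
  constructor
  · intro hwa
    obtain ⟨q, r, rfl⟩ := Walk.mem_support_iff_exists_append.mp ha
    obtain ⟨h1, h2, h3, h4⟩ := hp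
    have hq1 : 1 ≤ q.length := one_le_length_of_ne q (fun h => hx1 (by rw [h]; exact hwa))
    have hr1 : 1 ≤ r.length := one_le_length_of_ne r (fun h => hy1 (by rw [← h]; exact hwa))
    have hwtB : IsWeaklyTollWalk G (q.append (Walk.cons hwa.symm (Walk.cons hwa r))) := by
      refine ⟨h1, h2, ?_, ?_⟩
      · intro z hz hadj
        rw [Walk.mem_support_append_iff] at hz
        have hB1 : (q.append (Walk.cons hwa.symm (Walk.cons hwa r))).getVert 1 = q.getVert 1 :=
          getVert_one_append _ _ hq1
        have hp1 : (q.append r).getVert 1 = q.getVert 1 := getVert_one_append _ _ hq1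
        rcases hz with hz | hz
        · rw [hB1, ← hp1]
          exact h3 z (by rw [Walk.mem_support_append_iff]; exact Or.inl hz) hadj
        · simp [Walk.support_cons] at hz
          rcases hz with rfl | rfl | hz
          · rw [hB1, ← hp1]
            exact h3 z (by rw [Walk.mem_support_append_iff]; exact Or.inr r.start_mem_support) hadj
          · exact absurd hadj.symm hx1
          · rw [hB1, ← hp1]
            exact h3 z (by rw [Walk.mem_support_append_iff]; exact Or.inr hz) hadj
      · intro z hz hadj
        rw [Walk.mem_support_append_iff] at hz
        have hBp : (q.append (Walk.cons hwa.symm (Walk.cons hwa r))).getVert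
            ((q.append (Walk.cons hwa.symm (Walk.cons hwa r))).length - 1)
            = r.getVert (r.length - 1) := by
          rw [penult_append _ _ (by simp [Walk.length_cons])]
          rw [penult_cons _ _ (by simp [Walk.length_cons])]
          rw [penult_cons _ _ hr1]
        have hpp : (q.append r).getVert ((q.append r).length - 1) = r.getVert (r.length - 1) :=
          penult_append _ _ hr1
        rcases hz with hz | hz
        · rw [hBp, ← hpp]
          exact h4 z (by rw [Walk.mem_support_append_iff]; exact Or.inl hz) hadj
        · simp [Walk.support_cons] at hz
          rcases hz with rfl | rfl | hz
          · rw [hBp, ← hpp]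
            exact h4 z (by rw [Walk.mem_support_append_iff]; exact Or.inr r.start_mem_support) hadj
          · exact absurd hadj hy1
          · rw [hBp, ← hpp]
            exact h4 z (by rw [Walk.mem_support_append_iff]; exact Or.inr hz) hadj
    exact ext_no hw hx2 hy2 _ hwtB
      (by rw [Walk.mem_support_append_iff]; right; simp [Walk.support_cons])
  · rintro rfl
    exact ext_no hw hx2 hy2 p hp ha

end WTaux
namespace WTaux

variable {G : SimpleGraph V}

lemma split_at [DecidableEq V] {a b y : V} (p : G.Walk a b) (hy : y ∈ p.support) :
    ∃ (t : G.Walk a y) (d : G.Walk y b), t.append d = p ∧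
      (∀ z ∈ t.support, z ∈ p.support) ∧ (∀ z ∈ d.support, z ∈ p.support) ∧
      t.length + d.length = p.length :=
  ⟨p.takeUntil y hy, p.dropUntil y hy, p.take_spec hy,
    fun z hz => Walk.support_takeUntil_subset p hy hz,
    fun z hz => Walk.support_dropUntil_subset p hy hz, by
      have := congrArg Walk.length (p.take_spec hy)
      rwa [Walk.length_append] at this⟩

lemma exists_min_avoiding {a b : V} (A : Set V)
    (h : ∃ p : G.Walk a b, ∀ y ∈ p.support, y ∉ A) :
    ∃ p : G.Walk a b, p.IsPath ∧ (∀ y ∈ p.support, y ∉ A) ∧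
      ∀ q : G.Walk a b, (∀ y ∈ q.support, y ∉ A) → p.length ≤ q.length := by
  classical
  have hne : ∃ n, ∃ p : G.Walk a b, (∀ y ∈ p.support, y ∉ A) ∧ p.length = n := by
    obtain ⟨p, hp⟩ := h; exact ⟨p.length, p, hp, rfl⟩
  obtain ⟨p, hp, hlen⟩ := Nat.find_spec hne
  refine ⟨p.bypass, Walk.bypass_isPath p, fun y hy => hp y (Walk.support_bypass_subset _ hy),
    fun q hq => ?_⟩
  have h1 : Nat.find hne ≤ q.length := Nat.find_min' hne ⟨q, hq, rfl⟩
  have h2 : p.bypass.length ≤ p.length := Walk.length_bypass_le p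
  omega

lemma min_wt [DecidableEq V] {a b : V} {A : Set V} (hab : a ≠ b) (hnadj : ¬ G.Adj a b) (hbA : b ∉ A)
    {p : G.Walk a b} (hav : ∀ y ∈ p.support, y ∉ A)
    (hmin : ∀ q : G.Walk a b, (∀ y ∈ q.support, y ∉ A) → p.length ≤ q.length) :
    IsWeaklyTollWalk G p := by
  refine ⟨hab, hnadj, ?_, ?_⟩
  · intro y hy hadj
    obtain ⟨t, d, hspec, hts, hds, hlen⟩ := split_at p hy
    have hq : ∀ z ∈ (Walk.cons hadj d).support, z ∉ A := by
      intro z hz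
      simp only [Walk.support_cons, List.mem_cons] at hz
      rcases hz with rfl | hz
      · exact hav z p.start_mem_support
      · exact hav z (hds z hz)
    have h2 := hmin _ hq
    rw [Walk.length_cons] at h2
    have htk : 1 ≤ t.length := one_le_length_of_ne _ hadj.ne
    have htk1 : t.length = 1 := by omega
    have : p.getVert 1 = y := by
      rw [← hspec, Walk.getVert_append, htk1, if_neg (by omega)]
      simp
    exact this.symm
  · intro y hy hadj
    obtain ⟨t, d, hspec, hts, hds, hlen⟩ := split_at p hy
    have hq : ∀ z ∈ (t.append (Walk.cons hadj Walk.nil)).support, z ∉ A := by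
      intro z hz
      rw [Walk.mem_support_append_iff] at hz
      rcases hz with hz | hz
      · exact hav z (hts z hz)
      · simp [Walk.support_cons] at hz
        rcases hz with rfl | rfl
        · exact hav z (hds z d.start_mem_support)
        · exact hbA
    have h2 := hmin _ hq
    rw [Walk.length_append, Walk.length_cons, Walk.length_nil] at h2
    have hdk : 1 ≤ d.length := one_le_length_of_ne _ hadj.ne
    have hdk1 : d.length = 1 := by omega
    have hpl : p.length - 1 = t.length := by omega
    have : p.getVert (p.length - 1) = y := by
      rw [hpl, ← hspec, Walk.getVert_append, if_neg (by omega)]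
      simp
    exact this.symm

end WTaux
namespace WTaux

variable {G : SimpleGraph V}

lemma decomp_last {a b : V} (q : G.Walk a b) (hne : 1 ≤ q.length) :
    ∃ (m : V) (s : G.Walk a m) (hmb : G.Adj m b), q = s.append (Walk.cons hmb Walk.nil) := by
  induction q with
  | nil => simp at hne
  | @cons _ c _ h' p ih =>
    cases p with
    | nil => exact ⟨_, Walk.nil, h', rfl⟩
    | cons h'' p' =>
      obtain ⟨m, s, hmb, hs⟩ := ih (by simp [Walk.length_cons])
      exact ⟨m, Walk.cons h' s, hmb, by rw [Walk.cons_append, ← hs]⟩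

lemma normalize {u v : V} :
    ∀ (n : ℕ) (W : G.Walk u v), W.length ≤ n → IsWeaklyTollWalk G W →
    ∃ (z : V) (h : G.Adj u z) (W1 : G.Walk z v),
      IsWeaklyTollWalk G (Walk.cons h W1) ∧
      (∀ x, x ∈ (Walk.cons h W1).support ↔ x ∈ W.support) ∧ u ∉ W1.support := by
  intro n
  induction n with
  | zero =>
    intro W hlen hwt
    exact absurd (Walk.eq_of_length_eq_zero (p := W) (by omega)) hwt.1
  | succ n ih =>
    intro W hlen hwt
    cases W with
    | nil => exact absurd rfl hwt.1
    | @cons _ z _ h W1 =>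
      by_cases hu : u ∈ W1.support
      case neg => exact ⟨z, h, W1, hwt, fun x => Iff.rfl, hu⟩
      case pos =>
        obtain ⟨q, r, hqr⟩ := Walk.mem_support_iff_exists_append.mp hu
        subst hqr
        have hzW : ∀ x ∈ (Walk.cons h (q.append r)).support, G.Adj u x → x = z := by
          intro x hx hadj
          have h3 := hwt.2.2.1 x hx hadj
          rwa [Walk.getVert_cons_succ, Walk.getVert_zero] at h3
        cases r with
        | nil => exact absurd rfl hwt.1
        | @cons _ m _ h' r' =>
          have hm : z = m := Eq.symm <| hzW m (by
            rw [Walk.support_cons, List.mem_cons]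
            right
            rw [Walk.mem_support_append_iff]
            right
            simp [Walk.support_cons]) h'
          subst hm
          obtain ⟨m2, s, hm2u, hq⟩ := decomp_last q (one_le_length_of_ne q h.ne')
          have hm2 : z = m2 := Eq.symm <| hzW m2 (by
            rw [Walk.support_cons, List.mem_cons]
            right
            rw [Walk.mem_support_append_iff]
            left
            rw [hq, Walk.mem_support_append_iff]
            right
            simp [Walk.support_cons]) hm2u.symm
          subst hm2
          subst hq
          have hsupp : ∀ x, x ∈ (Walk.cons h (s.append r')).support ↔
              x ∈ (Walk.cons h ((s.append (Walk.cons hm2u Walk.nil)).append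
                (Walk.cons h' r'))).support := by
            intro x
            have hzs : z ∈ s.support := s.start_mem_support
            simp only [Walk.support_cons, List.mem_cons, Walk.mem_support_append_iff]
            constructor
            · rintro (h1 | h1 | h1) <;> tauto
            · rintro (h1 | (h1 | h1 | h1 | h1) | h1 | h1) <;> subst_vars <;> tauto
          have hr'1 : 1 ≤ r'.length :=
            one_le_length_of_ne r' (fun hzv => hwt.2.1 (hzv ▸ h))
          have hwt2 : IsWeaklyTollWalk G (Walk.cons h (s.append r')) := by
            refine ⟨hwt.1, hwt.2.1, ?_, ?_⟩
            · intro x hx hadj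
              have hxz := hzW x ((hsupp x).mp hx) hadj
              rw [Walk.getVert_cons_succ, Walk.getVert_zero]
              exact hxz
            · intro x hx hadj
              have h4 := hwt.2.2.2 x ((hsupp x).mp hx) hadj
              have e1 : 1 ≤ ((s.append (Walk.cons hm2u Walk.nil)).append
                  (Walk.cons h' r')).length := by
                rw [Walk.length_append, Walk.length_cons]; omega
              have e2 : 1 ≤ (Walk.cons h' r').length := by rw [Walk.length_cons]; omega
              have e3 : 1 ≤ (s.append r').length := by rw [Walk.length_append]; omega
              rw [penult_cons _ _ e1, penult_append _ _ e2, penult_cons _ _ hr'1] at h4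
              rw [penult_cons _ _ e3, penult_append _ _ hr'1]
              exact h4
          have hlen2 : (Walk.cons h (s.append r')).length ≤ n := by
            simp only [Walk.length_cons, Walk.length_append, Walk.length_nil] at hlen ⊢
            omega
          obtain ⟨z2, h2, W12, hwt3, hiff2, hu2⟩ := ih (Walk.cons h (s.append r')) hlen2 hwt2
          exact ⟨z2, h2, W12, hwt3, fun x => (hiff2 x).trans (hsupp x), hu2⟩

end WTaux
namespace WTaux

variable {G : SimpleGraph V}

lemma caseFar [Fintype V] [DecidableEq V] (hconn : G.Connected) {u v w : V}
    (hw : WTConvex G ({w}ᶜ : Set V))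
    (hmax : ∀ x y : V, (wtInterval G {x, y}).ncard ≤ (wtInterval G {u, v}).ncard)
    (huv : u ≠ v) (hnadj : ¬ G.Adj u v)
    (hwu : ¬ G.Adj w u) (hwv : ¬ G.Adj w v) (hneu : w ≠ u) (hnev : w ≠ v) : False := by
  classical
  obtain ⟨Q0, hQ0path, hQ0av, hQ0min⟩ := exists_min_avoiding (∅ : Set V)
    ⟨(hconn u v).some, by simp⟩
  have hQ0wt : IsWeaklyTollWalk G Q0 := min_wt huv hnadj (by simp) hQ0av hQ0min
  have hTex : ∃ n, ∃ (s : V) (R : G.Walk w s), (G.Adj u s ∨ G.Adj v s) ∧ R.length = n := by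
    obtain ⟨p⟩ := hconn w u
    obtain ⟨m, s', hmu, -⟩ := decomp_last p (one_le_length_of_ne p hneu)
    exact ⟨s'.length, m, s', Or.inl hmu.symm, rfl⟩
  obtain ⟨s, R, hsT, hRlen⟩ := Nat.find_spec hTex
  have hminT : ∀ (s' : V) (R' : G.Walk w s'), (G.Adj u s' ∨ G.Adj v s') →
      Nat.find hTex ≤ R'.length :=
    fun s' R' h => Nat.find_min' hTex ⟨s', R', h, rfl⟩
  have hsw : s ≠ w := by
    rintro rfl
    rcases hsT with h | h
    · exact hwu h.symm
    · exact hwv h.symm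
  have hR1 : 1 ≤ R.length := one_le_length_of_ne R (Ne.symm hsw)
  have F1 : ∀ y ∈ R.support, y ≠ s → ¬ G.Adj u y ∧ ¬ G.Adj v y := by
    intro y hy hys
    by_contra hcon
    have hcon2 : G.Adj u y ∨ G.Adj v y := by tauto
    obtain ⟨t, d, hspec, -, -, hlen⟩ := split_at R hy
    have h1 := hminT y t hcon2
    have hd1 : 1 ≤ d.length := one_le_length_of_ne d hys
    omega
  have F2 : ∀ y ∈ R.support, G.Adj w y → y = R.getVert 1 := by
    intro y hy hadj
    obtain ⟨t, d, hspec, -, -, hlen⟩ := split_at R hy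
    have h1 := hminT s (Walk.cons hadj d) hsT
    rw [Walk.length_cons] at h1
    have ht1 : 1 ≤ t.length := one_le_length_of_ne t hadj.ne
    have ht2 : t.length = 1 := by omega
    have hgy : R.getVert 1 = y := by
      rw [← hspec, Walk.getVert_append, ht2, if_neg (by omega)]
      simp
    exact hgy.symm
  by_cases hus : G.Adj u s
  · by_cases hvs : G.Adj v s
    · -- bounce walk u - s - (R.reverse) - (R) - s - v through w
      have hM2len : 1 ≤ (R.append (Walk.cons hvs.symm Walk.nil)).length := by
        rw [Walk.length_append, Walk.length_cons]; omega
      have hMlen : 1 ≤ (R.reverse.append (R.append (Walk.cons hvs.symm Walk.nil))).length := by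
        rw [Walk.length_append]; omega
      have hsupB : ∀ x, x ∈ (Walk.cons hus
          (R.reverse.append (R.append (Walk.cons hvs.symm Walk.nil)))).support ↔
          (x = u ∨ x ∈ R.support ∨ x = v) := by
        intro x
        have hsR : s ∈ R.support := R.end_mem_support
        simp only [Walk.support_cons, List.mem_cons, Walk.mem_support_append_iff,
          Walk.support_reverse, List.mem_reverse, Walk.support_nil, List.mem_singleton]
        constructor
        · intro h1
          rcases h1 with h1 | h1 | h1 | h1 | h1 <;> subst_vars <;> tauto
        · intro h1
          rcases h1 with h1 | h1 | h1 <;> subst_vars <;> tauto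
      have hgv1 : (Walk.cons hus
          (R.reverse.append (R.append (Walk.cons hvs.symm Walk.nil)))).getVert 1 = s :=
        Walk.getVert_cons_one _ hus
      have hpenB : (Walk.cons hus
          (R.reverse.append (R.append (Walk.cons hvs.symm Walk.nil)))).getVert
          ((Walk.cons hus
          (R.reverse.append (R.append (Walk.cons hvs.symm Walk.nil)))).length - 1) = s := by
        rw [penult_cons _ _ hMlen, penult_append _ _ hM2len,
          penult_append _ _ (by simp [Walk.length_cons])]
        simp [Walk.length_cons]
      have hwtB : IsWeaklyTollWalk G (Walk.cons hus
          (R.reverse.append (R.append (Walk.cons hvs.symm Walk.nil)))) := by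
        refine ⟨huv, hnadj, ?_, ?_⟩
        · intro z hz hadj
          rw [hgv1]
          rcases (hsupB z).mp hz with rfl | hz | rfl
          · exact absurd hadj (G.loopless.irrefl _)
          · by_cases hzs : z = s
            · exact hzs
            · exact absurd hadj (F1 z hz hzs).1
          · exact absurd hadj hnadj
        · intro z hz hadj
          rw [hpenB]
          rcases (hsupB z).mp hz with rfl | hz | rfl
          · exact absurd hadj hnadj
          · by_cases hzs : z = s
            · exact hzs
            · exact absurd hadj.symm (F1 z hz hzs).2
          · exact absurd hadj (G.loopless.irrefl _)
      exact ext_no hw (Ne.symm hneu) (Ne.symm hnev) _ hwtB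
        ((hsupB w).mpr (Or.inr (Or.inl R.start_mem_support)))
    · -- Adj u s, ¬ Adj v s : I(u,v) ∪ {w} ⊆ I(w,v)
      have hkey : ∀ (W : G.Walk u v), IsWeaklyTollWalk G W →
          ∃ B : G.Walk w v, IsWeaklyTollWalk G B ∧
            (∀ x ∈ W.support, x ∈ B.support) ∧ u ∈ B.support := by
        intro W hWwt
        have havoid := ext_avoid hw hwu (Ne.symm hneu) hwv (Ne.symm hnev) hWwt
        have hWlen : 1 ≤ W.length := one_le_length_of_ne W huv
        refine ⟨R.append (Walk.cons hus.symm W), ⟨hnev, hwv, ?_, ?_⟩, ?_, ?_⟩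
        · intro z hz hadj
          rw [getVert_one_append _ _ hR1]
          rw [Walk.mem_support_append_iff] at hz
          rcases hz with hz | hz
          · exact F2 z hz hadj
          · rw [Walk.support_cons, List.mem_cons] at hz
            rcases hz with rfl | hz
            · exact F2 z R.end_mem_support hadj
            · exact absurd hadj (havoid z hz).1
        · intro z hz hadj
          have hpen : (R.append (Walk.cons hus.symm W)).getVert
              ((R.append (Walk.cons hus.symm W)).length - 1) = W.getVert (W.length - 1) := by
            rw [penult_append _ _ (by rw [Walk.length_cons]; omega), penult_cons _ _ hWlen]
          rw [hpen]
          rw [Walk.mem_support_append_iff] at hz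
          rcases hz with hz | hz
          · by_cases hzs : z = s
            · subst hzs; exact absurd hadj.symm hvs
            · exact absurd hadj.symm (F1 z hz hzs).2
          · rw [Walk.support_cons, List.mem_cons] at hz
            rcases hz with rfl | hz
            · exact absurd hadj.symm hvs
            · exact hWwt.2.2.2 z hz hadj
        · intro x hx
          rw [Walk.mem_support_append_iff]
          right
          rw [Walk.support_cons, List.mem_cons]
          right; exact hx
        · rw [Walk.mem_support_append_iff]
          right
          rw [Walk.support_cons, List.mem_cons]
          right; exact W.start_mem_support
      have hsub : wtInterval G {u, v} ⊆ wtInterval G {w, v} := by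
        intro x hx
        by_cases hxv : x = v
        · subst hxv; exact Or.inl (by simp)
        by_cases hxu : x = u
        · subst hxu
          obtain ⟨B, hBwt, -, hBu⟩ := hkey Q0 hQ0wt
          exact mem_interval_intro B hBwt hBu
        obtain ⟨W, hWwt, hxW⟩ := mem_interval_elim hx hxu hxv
        obtain ⟨B, hBwt, hBsub, -⟩ := hkey W hWwt
        exact mem_interval_intro B hBwt (hBsub x hxW)
      exact ncard_contra hmax hsub (Or.inl (by simp))
        (ext_notin hw (Ne.symm hneu) (Ne.symm hnev))
  · -- ¬Adj u s so Adj v s : I(u,v) ∪ {w} ⊆ I(w,u)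
    have hvs : G.Adj v s := hsT.resolve_left hus
    have hkey : ∀ (W : G.Walk u v), IsWeaklyTollWalk G W →
        ∃ B : G.Walk w u, IsWeaklyTollWalk G B ∧
          (∀ x ∈ W.support, x ∈ B.support) ∧ v ∈ B.support := by
      intro W hWwt
      have havoid := ext_avoid hw hwu (Ne.symm hneu) hwv (Ne.symm hnev) hWwt
      have hWr := isWT_reverse hWwt
      have hWlen : 1 ≤ W.reverse.length := by
        rw [Walk.length_reverse]; exact one_le_length_of_ne W huv
      refine ⟨R.append (Walk.cons hvs.symm W.reverse), ⟨hneu, hwu, ?_, ?_⟩, ?_, ?_⟩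
      · intro z hz hadj
        rw [getVert_one_append _ _ hR1]
        rw [Walk.mem_support_append_iff] at hz
        rcases hz with hz | hz
        · exact F2 z hz hadj
        · rw [Walk.support_cons, List.mem_cons] at hz
          rcases hz with rfl | hz
          · exact F2 z R.end_mem_support hadj
          · rw [Walk.support_reverse, List.mem_reverse] at hz
            exact absurd hadj (havoid z hz).1
      · intro z hz hadj
        have hpen : (R.append (Walk.cons hvs.symm W.reverse)).getVert
            ((R.append (Walk.cons hvs.symm W.reverse)).length - 1)
            = W.reverse.getVert (W.reverse.length - 1) := by
          rw [penult_append _ _ (by rw [Walk.length_cons]; omega), penult_cons _ _ hWlen]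
        rw [hpen]
        rw [Walk.mem_support_append_iff] at hz
        rcases hz with hz | hz
        · by_cases hzs : z = s
          · subst hzs; exact absurd hadj.symm hus
          · exact absurd hadj.symm (F1 z hz hzs).1
        · rw [Walk.support_cons, List.mem_cons] at hz
          rcases hz with rfl | hz
          · exact absurd hadj.symm hus
          · exact hWr.2.2.2 z hz hadj
      · intro x hx
        rw [Walk.mem_support_append_iff]
        right
        rw [Walk.support_cons, List.mem_cons]
        right
        rw [Walk.support_reverse, List.mem_reverse]
        exact hx
      · rw [Walk.mem_support_append_iff]
        right
        rw [Walk.support_cons, List.mem_cons]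
        right; exact W.reverse.start_mem_support
    have hsub : wtInterval G {u, v} ⊆ wtInterval G {w, u} := by
      intro x hx
      by_cases hxu : x = u
      · subst hxu; exact Or.inl (by simp)
      by_cases hxv : x = v
      · subst hxv
        obtain ⟨B, hBwt, -, hBv⟩ := hkey Q0 hQ0wt
        exact mem_interval_intro B hBwt hBv
      obtain ⟨W, hWwt, hxW⟩ := mem_interval_elim hx hxu hxv
      obtain ⟨B, hBwt, hBsub, -⟩ := hkey W hWwt
      exact mem_interval_intro B hBwt (hBsub x hxW)
    exact ncard_contra hmax hsub (Or.inl (by simp))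
      (ext_notin hw (Ne.symm hneu) (Ne.symm hnev))

end WTaux
namespace WTaux

variable {G : SimpleGraph V}

lemma caseAdj [Fintype V] [DecidableEq V] (hconn : G.Connected) {u v w : V}
    (hw : WTConvex G ({w}ᶜ : Set V))
    (hmax : ∀ x y : V, (wtInterval G {x, y}).ncard ≤ (wtInterval G {u, v}).ncard)
    (huv : u ≠ v) (hnadj : ¬ G.Adj u v) (hwu : G.Adj w u) :
    closedNbhd G w = closedNbhd G u := by
  classical
  have hwv : ¬ G.Adj w v := fun h => hnadj (ext_clique hw hwu h huv)
  have hnev : w ≠ v := by rintro rfl; exact hnadj hwu.symm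
  have hnwu : w ≠ u := hwu.ne
  have hNwu : ∀ y, G.Adj w y → y = u ∨ G.Adj y u := by
    intro y hy
    by_cases h : y = u
    · exact Or.inl h
    · exact Or.inr (ext_clique hw hy hwu h)
  have hkey : u ∈ wtInterval G {w, v} → False := by
    intro huI
    have hsub : wtInterval G {u, v} ⊆ wtInterval G {w, v} := by
      intro x hx
      by_cases hxv : x = v
      · subst hxv; exact Or.inl (by simp)
      by_cases hxu : x = u
      · subst hxu; exact huI
      obtain ⟨W, hWwt, hxW⟩ := mem_interval_elim hx hxu hxv
      obtain ⟨z, hz, W1, hWt', hiff, hu1⟩ := normalize W.length W le_rfl hWwt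
      have hW1len : 1 ≤ W1.length := one_le_length_of_ne W1 (fun h => hnadj (h ▸ hz))
      have hxW1 : x ∈ W1.support := by
        have hx2 := (hiff x).mpr hxW
        rw [Walk.support_cons, List.mem_cons] at hx2
        rcases hx2 with rfl | hx2
        · exact absurd rfl hxu
        · exact hx2
      have hgv1 : (Walk.cons hz W1).getVert 1 = z := Walk.getVert_cons_one _ hz
      by_cases hwz : G.Adj w z
      · refine mem_interval_intro (Walk.cons hwz W1) ⟨hnev, hwv, ?_, ?_⟩
          (by rw [Walk.support_cons, List.mem_cons]; right; exact hxW1)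
        · intro y hy hadj
          rw [Walk.getVert_cons_one _ hwz]
          rw [Walk.support_cons, List.mem_cons] at hy
          rcases hy with rfl | hy
          · exact absurd hadj (G.loopless.irrefl _)
          · rcases hNwu y hadj with rfl | hyu
            · exact absurd hy hu1
            · have h5 := hWt'.2.2.1 y
                (by rw [Walk.support_cons, List.mem_cons]; right; exact hy) hyu.symm
              rwa [hgv1] at h5
        · intro y hy hadj
          rw [penult_cons _ _ hW1len]
          rw [Walk.support_cons, List.mem_cons] at hy
          rcases hy with rfl | hy
          · exact absurd hadj hwv
          · have h5 := hWt'.2.2.2 y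
              (by rw [Walk.support_cons, List.mem_cons]; right; exact hy) hadj
            rwa [penult_cons _ _ hW1len] at h5
      · refine mem_interval_intro (Walk.cons hwu (Walk.cons hz W1)) ⟨hnev, hwv, ?_, ?_⟩
          (by rw [Walk.support_cons, List.mem_cons]; right
              rw [Walk.support_cons, List.mem_cons]; right; exact hxW1)
        · intro y hy hadj
          rw [Walk.getVert_cons_one]
          rw [Walk.support_cons, List.mem_cons] at hy
          rcases hy with rfl | hy
          · exact absurd hadj (G.loopless.irrefl _)
          · rcases hNwu y hadj with rfl | hyu
            · rfl
            · have h5 := hWt'.2.2.1 y hy hyu.symm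
              rw [hgv1] at h5
              exact absurd (h5 ▸ hadj) hwz
        · intro y hy hadj
          have hclen : 1 ≤ (Walk.cons hz W1).length := by rw [Walk.length_cons]; omega
          rw [penult_cons _ _ hclen]
          rw [Walk.support_cons, List.mem_cons] at hy
          rcases hy with rfl | hy
          · exact absurd hadj hwv
          · exact hWt'.2.2.2 y hy hadj
    exact ncard_contra hmax hsub (Or.inl (by simp)) (ext_notin hw (Ne.symm hnwu) (Ne.symm hnev))
  have hDone : ∀ t, G.Adj u t → t = w ∨ G.Adj w t := by
    intro t hut
    by_contra hcon
    push_neg at hcon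
    obtain ⟨htw, hwt⟩ := hcon
    have htnev : t ≠ v := by rintro rfl; exact hnadj hut
    have hC : ∀ p : G.Walk u v, ∃ y ∈ p.support, G.Adj w y ∧ y ≠ u := by
      intro p
      by_contra hcon2
      push_neg at hcon2
      have hex : ∃ q : G.Walk u v, ∀ y ∈ q.support, y ∉ {y' : V | G.Adj w y' ∧ y' ≠ u} := by
        refine ⟨p, fun y hy hyA => ?_⟩
        exact hyA.2 (hcon2 y hy hyA.1)
      obtain ⟨q, hqpath, hqav, hqmin⟩ := exists_min_avoiding _ hex
      have hqwt : IsWeaklyTollWalk G q := min_wt huv hnadj (fun h => hwv h.1) hqav hqmin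
      have hq1 : 1 ≤ q.length := one_le_length_of_ne q huv
      apply hkey
      refine mem_interval_intro (Walk.cons hwu q) ⟨hnev, hwv, ?_, ?_⟩
        (by rw [Walk.support_cons, List.mem_cons]; right; exact q.start_mem_support)
      · intro y hy hadj
        rw [Walk.getVert_cons_one]
        rw [Walk.support_cons, List.mem_cons] at hy
        rcases hy with rfl | hy
        · exact absurd hadj (G.loopless.irrefl _)
        · by_contra hne2
          exact (hqav y hy) ⟨hadj, hne2⟩
      · intro y hy hadj
        rw [penult_cons _ _ hq1]
        rw [Walk.support_cons, List.mem_cons] at hy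
        rcases hy with rfl | hy
        · exact absurd hadj hwv
        · exact hqwt.2.2.2 y hy hadj
    have htv : ¬ G.Adj t v := by
      intro htv
      apply hkey
      refine mem_interval_intro (Walk.cons hwu (Walk.cons hut (Walk.cons htv Walk.nil)))
        ⟨hnev, hwv, ?_, ?_⟩
        (by rw [Walk.support_cons, List.mem_cons]; right; exact Walk.start_mem_support _)
      · intro y hy hadj
        rw [Walk.getVert_cons_one]
        simp only [Walk.support_cons, Walk.support_nil, List.mem_cons,
          List.mem_singleton, List.not_mem_nil, or_false] at hy
        rcases hy with rfl | rfl | rfl | rfl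
        · exact absurd hadj (G.loopless.irrefl _)
        · rfl
        · exact absurd hadj hwt
        · exact absurd hadj hwv
      · intro y hy hadj
        have hpen : (Walk.cons hwu (Walk.cons hut (Walk.cons htv Walk.nil))).getVert
            ((Walk.cons hwu (Walk.cons hut (Walk.cons htv Walk.nil))).length - 1) = t := rfl
        rw [hpen]
        simp only [Walk.support_cons, Walk.support_nil, List.mem_cons,
          List.mem_singleton, List.not_mem_nil, or_false] at hy
        rcases hy with rfl | rfl | rfl | rfl
        · exact absurd hadj hwv
        · exact absurd hadj hnadj
        · rfl
        · exact absurd hadj (G.loopless.irrefl _)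
    obtain ⟨Q, hQpath, hQav, hQmin⟩ := exists_min_avoiding (∅ : Set V)
      ⟨(hconn u v).some, by simp⟩
    have hQwt : IsWeaklyTollWalk G Q := min_wt huv hnadj (by simp) hQav hQmin
    have hQmin' : ∀ q : G.Walk u v, Q.length ≤ q.length := fun q => hQmin q (by simp)
    cases Q with
    | nil => exact huv rfl
    | @cons _ z1 _ h1 Q1 =>
      have hz1v : z1 ≠ v := fun h => hnadj (h ▸ h1)
      cases Q1 with
      | nil => exact hz1v rfl
      | @cons _ q2 _ h2 Q2 =>
        have hgv1 : (Walk.cons h1 (Walk.cons h2 Q2)).getVert 1 = z1 :=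
          Walk.getVert_cons_one _ h1
        have hnd := hQpath.support_nodup
        rw [Walk.support_cons, List.nodup_cons] at hnd
        obtain ⟨hu_not, hnd1⟩ := hnd
        rw [Walk.support_cons, List.nodup_cons] at hnd1
        obtain ⟨hz1_not, hnd2⟩ := hnd1
        have hz1C : G.Adj w z1 ∧ z1 ≠ u := by
          obtain ⟨y, hy, hyw, hyu⟩ := hC (Walk.cons h1 (Walk.cons h2 Q2))
          rcases hNwu y hyw with rfl | hyu'
          · exact absurd rfl hyu
          · have h5 := hQwt.2.2.1 y hy hyu'.symm
            rw [hgv1] at h5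
            subst h5
            exact ⟨hyw, hyu⟩
        have hdeep : ∀ y ∈ Q2.support, y ≠ q2 → ¬ G.Adj t y := by
          intro y hy hyq2 hty
          obtain ⟨tk, dr, hspec, -, -, hlen⟩ := split_at Q2 hy
          have h5 := hQmin' (Walk.cons hut (Walk.cons hty dr))
          simp only [Walk.length_cons] at h5
          have h7 : 1 ≤ tk.length := one_le_length_of_ne tk (Ne.symm hyq2)
          omega
        by_cases htq2 : G.Adj t q2
        · have hq2v : q2 ≠ v := fun h => htv (h ▸ htq2)
          have hQ2len : 1 ≤ Q2.length := one_le_length_of_ne Q2 hq2v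
          have hQ'wt : IsWeaklyTollWalk G (Walk.cons hut (Walk.cons htq2 Q2)) := by
            refine ⟨huv, hnadj, ?_, ?_⟩
            · intro y hy hadj
              rw [Walk.getVert_cons_one]
              simp only [Walk.support_cons, List.mem_cons] at hy
              rcases hy with rfl | rfl | hy
              · exact absurd hadj (G.loopless.irrefl _)
              · rfl
              · have h5 := hQwt.2.2.1 y
                  (by simp only [Walk.support_cons, List.mem_cons]; right; right; exact hy) hadj
                rw [hgv1] at h5
                subst h5
                exact absurd hy hz1_not
            · intro y hy hadj
              have hp1 : (Walk.cons hut (Walk.cons htq2 Q2)).getVert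
                  ((Walk.cons hut (Walk.cons htq2 Q2)).length - 1)
                  = Q2.getVert (Q2.length - 1) := by
                rw [penult_cons _ _ (by rw [Walk.length_cons]; omega), penult_cons _ _ hQ2len]
              have hp2 : (Walk.cons h1 (Walk.cons h2 Q2)).getVert
                  ((Walk.cons h1 (Walk.cons h2 Q2)).length - 1)
                  = Q2.getVert (Q2.length - 1) := by
                rw [penult_cons _ _ (by rw [Walk.length_cons]; omega), penult_cons _ _ hQ2len]
              rw [hp1]
              simp only [Walk.support_cons, List.mem_cons] at hy
              rcases hy with rfl | rfl | hy
              · exact absurd hadj hnadj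
              · exact absurd hadj htv
              · have h5 := hQwt.2.2.2 y
                  (by simp only [Walk.support_cons, List.mem_cons]; right; right; exact hy) hadj
                rw [hp2] at h5
                exact h5
          obtain ⟨y, hy, hyw, hyu⟩ := hC (Walk.cons hut (Walk.cons htq2 Q2))
          rcases hNwu y hyw with rfl | hyu'
          · exact absurd rfl hyu
          · have h5 := hQ'wt.2.2.1 y hy hyu'.symm
            rw [Walk.getVert_cons_one] at h5
            subst h5
            exact hwt hyw
        · by_cases htz1 : G.Adj t z1
          · have hQ1len : 1 ≤ (Walk.cons h2 Q2).length := by rw [Walk.length_cons]; omega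
            have hp2 : (Walk.cons h1 (Walk.cons h2 Q2)).getVert
                ((Walk.cons h1 (Walk.cons h2 Q2)).length - 1)
                = (Walk.cons h2 Q2).getVert ((Walk.cons h2 Q2).length - 1) :=
              penult_cons _ _ hQ1len
            have hwtB : IsWeaklyTollWalk G (Walk.cons htz1 (Walk.cons hz1C.1.symm
                (Walk.cons hz1C.1 (Walk.cons h2 Q2)))) := by
              refine ⟨htnev, htv, ?_, ?_⟩
              · intro y hy hadj
                rw [Walk.getVert_cons_one]
                simp only [Walk.support_cons, List.mem_cons] at hy
                rcases hy with rfl | rfl | rfl | rfl | hy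
                · exact absurd hadj (G.loopless.irrefl _)
                · rfl
                · exact absurd hadj.symm hwt
                · rfl
                · by_cases hyq2 : y = q2
                  · subst hyq2; exact absurd hadj htq2
                  · exact absurd hadj (hdeep y hy hyq2)
              · intro y hy hadj
                have hp1 : (Walk.cons htz1 (Walk.cons hz1C.1.symm
                    (Walk.cons hz1C.1 (Walk.cons h2 Q2)))).getVert
                    ((Walk.cons htz1 (Walk.cons hz1C.1.symm
                    (Walk.cons hz1C.1 (Walk.cons h2 Q2)))).length - 1)
                    = (Walk.cons h2 Q2).getVert ((Walk.cons h2 Q2).length - 1) := by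
                  rw [penult_cons _ _ (by simp only [Walk.length_cons]; omega),
                    penult_cons _ _ (by simp only [Walk.length_cons]; omega),
                    penult_cons _ _ hQ1len]
                rw [hp1]
                simp only [Walk.support_cons, List.mem_cons] at hy
                rcases hy with rfl | rfl | rfl | rfl | hy
                · exact absurd hadj htv
                · have h5 := hQwt.2.2.2 y
                    (by simp only [Walk.support_cons, List.mem_cons]; right; left; trivial) hadj
                  rw [hp2] at h5
                  exact h5
                · exact absurd hadj hwv
                · have h5 := hQwt.2.2.2 y
                    (by simp only [Walk.support_cons, List.mem_cons]; right; left; trivial) hadj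
                  rw [hp2] at h5
                  exact h5
                · have h5 := hQwt.2.2.2 y
                    (by simp only [Walk.support_cons, List.mem_cons]; right; right; exact hy) hadj
                  rw [hp2] at h5
                  exact h5
            exact ext_no hw htw (Ne.symm hnev) _ hwtB (by simp [Walk.support_cons])
          · have hQlen1 : 1 ≤ (Walk.cons h1 (Walk.cons h2 Q2)).length := by
              rw [Walk.length_cons]; omega
            have hwtB : IsWeaklyTollWalk G (Walk.cons hut.symm (Walk.cons hwu.symm
                (Walk.cons hwu (Walk.cons h1 (Walk.cons h2 Q2))))) := by
              refine ⟨htnev, htv, ?_, ?_⟩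
              · intro y hy hadj
                rw [Walk.getVert_cons_one]
                simp only [Walk.support_cons, List.mem_cons] at hy
                rcases hy with rfl | rfl | rfl | rfl | rfl | hy
                · exact absurd hadj (G.loopless.irrefl _)
                · rfl
                · exact absurd hadj.symm hwt
                · rfl
                · exact absurd hadj htz1
                · by_cases hyq2 : y = q2
                  · subst hyq2; exact absurd hadj htq2
                  · exact absurd hadj (hdeep y hy hyq2)
              · intro y hy hadj
                have hp1 : (Walk.cons hut.symm (Walk.cons hwu.symm
                    (Walk.cons hwu (Walk.cons h1 (Walk.cons h2 Q2))))).getVert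
                    ((Walk.cons hut.symm (Walk.cons hwu.symm
                    (Walk.cons hwu (Walk.cons h1 (Walk.cons h2 Q2))))).length - 1)
                    = (Walk.cons h1 (Walk.cons h2 Q2)).getVert
                      ((Walk.cons h1 (Walk.cons h2 Q2)).length - 1) := by
                  rw [penult_cons _ _ (by simp only [Walk.length_cons]; omega),
                    penult_cons _ _ (by simp only [Walk.length_cons]; omega),
                    penult_cons _ _ hQlen1]
                rw [hp1]
                simp only [Walk.support_cons, List.mem_cons] at hy
                rcases hy with rfl | rfl | rfl | rfl | rfl | hy
                · exact absurd hadj htv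
                · exact absurd hadj hnadj
                · exact absurd hadj hwv
                · exact absurd hadj hnadj
                · exact hQwt.2.2.2 y
                    (by simp only [Walk.support_cons, List.mem_cons]; right; left; trivial) hadj
                · exact hQwt.2.2.2 y
                    (by simp only [Walk.support_cons, List.mem_cons]; right; right; exact hy) hadj
            exact ext_no hw htw (Ne.symm hnev) _ hwtB (by simp [Walk.support_cons])
  ext y
  simp only [closedNbhd, Set.mem_insert_iff, mem_neighborSet]
  constructor
  · rintro (rfl | hy)
    · exact Or.inr hwu.symm
    · rcases hNwu y hy with rfl | h
      · exact Or.inl rfl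
      · exact Or.inr h.symm
  · rintro (rfl | hy)
    · exact Or.inr hwu
    · rcases hDone y hy with rfl | h
      · exact Or.inl rfl
      · exact Or.inr h

end WTaux

/-- if `u,v` maximize the size of the weakly toll interval in a
connected non-complete graph, then every weakly toll extreme vertex of `G` is a
true twin of `u` or of `v` (or equals one of them). -/
theorem stmt12 [Fintype V] (G : SimpleGraph V) (hconn : G.Connected)
    (hnc : ∃ a b : V, a ≠ b ∧ ¬ G.Adj a b) (u v : V)
    (hmax : ∀ w z : V, (wtInterval G {w, z}).ncard ≤ (wtInterval G {u, v}).ncard)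
    (w : V) (hw : WTConvex G ({w}ᶜ : Set V)) :
    closedNbhd G w = closedNbhd G u ∨ closedNbhd G w = closedNbhd G v := by
  classical
  obtain ⟨a, b, hab, hnab⟩ := hnc
  -- the maximum interval has at least 3 elements
  have h3ab : 3 ≤ (wtInterval G {a, b}).ncard := by
    obtain ⟨Qab, hQabpath, hQabav, hQabmin⟩ := WTaux.exists_min_avoiding (∅ : Set V)
      ⟨(hconn a b).some, by simp⟩
    have hQabwt : IsWeaklyTollWalk G Qab := WTaux.min_wt hab hnab (by simp) hQabav hQabmin
    have hlen1 : 1 ≤ Qab.length := WTaux.one_le_length_of_ne Qab hab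
    have hz : G.Adj a (Qab.getVert 1) := by
      have := Qab.adj_getVert_succ (i := 0) (by omega)
      rwa [Qab.getVert_zero] at this
    have hza : Qab.getVert 1 ≠ a := hz.ne'
    have hzb : Qab.getVert 1 ≠ b := fun h => hnab (h ▸ hz)
    have hsub : ({a, Qab.getVert 1, b} : Set V) ⊆ wtInterval G {a, b} := by
      rintro x (rfl | rfl | rfl)
      · exact Or.inl (by simp)
      · exact WTaux.mem_interval_intro Qab hQabwt (Walk.mem_support_iff_exists_getVert.mpr ⟨1, rfl, hlen1⟩)
      · exact Or.inl (by simp)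
    have hcard : ({a, Qab.getVert 1, b} : Set V).ncard = 3 := by
      rw [Set.ncard_insert_of_notMem (by simp [Ne.symm hza, hab]), Set.ncard_pair hzb]
    calc 3 = ({a, Qab.getVert 1, b} : Set V).ncard := hcard.symm
      _ ≤ (wtInterval G {a, b}).ncard := Set.ncard_le_ncard hsub (Set.toFinite _)
  have h3 : 3 ≤ (wtInterval G {u, v}).ncard := le_trans h3ab (hmax a b)
  have huv : u ≠ v := by
    rintro rfl
    have hsub : wtInterval G {u, u} ⊆ {u} := by
      rintro x (h | ⟨c, hc, d, hd, p, hp, hx⟩)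
      · simpa using h
      · simp at hc hd
        subst hc; subst hd
        exact absurd rfl hp.1
    have := Set.ncard_le_ncard hsub (Set.toFinite _)
    rw [Set.ncard_singleton] at this
    omega
  have hnadj : ¬ G.Adj u v := by
    intro hadj
    have hsub : wtInterval G {u, v} ⊆ {u, v} := by
      rintro x (h | ⟨c, hc, d, hd, p, hp, hx⟩)
      · exact h
      · simp at hc hd
        rcases hc with rfl | rfl <;> rcases hd with rfl | rfl
        · exact absurd rfl hp.1
        · exact absurd hadj hp.2.1
        · exact absurd hadj.symm hp.2.1
        · exact absurd rfl hp.1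
    have h1 := Set.ncard_le_ncard hsub (Set.toFinite _)
    have h2 : ({u, v} : Set V).ncard ≤ 2 := by
      have := Set.ncard_insert_le u ({v} : Set V)
      rw [Set.ncard_singleton] at this
      omega
    omega
  by_cases hwu : w = u
  · left; rw [hwu]
  by_cases hwv : w = v
  · right; rw [hwv]
  by_cases hadju : G.Adj w u
  · exact Or.inl (WTaux.caseAdj hconn hw hmax huv hnadj hadju)
  by_cases hadjv : G.Adj w v
  · right
    have hmax' : ∀ x y : V, (wtInterval G {x, y}).ncard ≤ (wtInterval G {v, u}).ncard := by
      intro x y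
      rw [Set.pair_comm v u]
      exact hmax x y
    exact WTaux.caseAdj hconn hw hmax' (Ne.symm huv) (fun h => hnadj h.symm) hadjv
  · exact absurd (WTaux.caseFar hconn hw hmax huv hnadj hadju hadjv hwu hwv) id
end

section
/- For any graph G, at most two classes of true twins of G are entirely formed by weakly toll extreme vertices; more precisely, the weakly toll extreme vertices of a connected non-complete graph G are contained in T[u] ∪ T[v] for some pair u, v of vertices (where T[x] is the true-twin class of x). -/
open SimpleGraph

variable {V : Type*}

section Aux

open SimpleGraph Walk

variable {G : SimpleGraph V}

lemma mem_twinClass_iff {u w : V} :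
    w ∈ twinClass G u ↔ closedNbhd G w = closedNbhd G u := Iff.rfl

lemma key1 {x a b : V} (Q : G.Walk a b) (hQ : Q.length = G.dist a b)
    (hr : G.dist a b ≤ G.dist x b) {s : V} (hs : s ∈ Q.support) (hadj : G.Adj x s) :
    s = a ∨ s = Q.getVert 1 := by
  classical
  have hspec : (Q.takeUntil s hs).append (Q.dropUntil s hs) = Q := Q.take_spec hs
  have hlen : (Q.takeUntil s hs).length + (Q.dropUntil s hs).length = Q.length := by
    have h := congrArg Walk.length hspec
    rwa [Walk.length_append] at h
  have h1 : G.dist x b ≤ (Q.dropUntil s hs).length + 1 := by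
    have := G.dist_le (Walk.cons hadj (Q.dropUntil s hs))
    simpa [Walk.length_cons] using this
  have hT1 : (Q.takeUntil s hs).length ≤ 1 := by omega
  interval_cases h : (Q.takeUntil s hs).length
  · left
    exact (Walk.eq_of_length_eq_zero h).symm
  · right
    have hgv : ((Q.takeUntil s hs).append (Q.dropUntil s hs)).getVert 1 = s := by
      rw [Walk.getVert_append, h]
      simp
    exact hgv.symm.trans (congrArg (fun p => Walk.getVert p 1) hspec)

lemma key2 {a b : V} (Q : G.Walk a b) (hQ : Q.length = G.dist a b)
    {s : V} (hs : s ∈ Q.support) (hadj : G.Adj s b) : s = Q.getVert (Q.length - 1) := by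
  classical
  have hspec : (Q.takeUntil s hs).append (Q.dropUntil s hs) = Q := Q.take_spec hs
  have hlen : (Q.takeUntil s hs).length + (Q.dropUntil s hs).length = Q.length := by
    have h := congrArg Walk.length hspec
    rwa [Walk.length_append] at h
  have h1 : G.dist a b ≤ (Q.takeUntil s hs).length + 1 := by
    have := G.dist_le ((Q.takeUntil s hs).append (Walk.cons hadj Walk.nil))
    simpa [Walk.length_append, Walk.length_cons] using this
  have hD1 : (Q.dropUntil s hs).length ≤ 1 := by omega
  interval_cases h : (Q.dropUntil s hs).length
  · exact absurd ((Walk.eq_of_length_eq_zero h) ▸ hadj) (G.loopless.irrefl b)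
  · have hidx : Q.length - 1 = (Q.takeUntil s hs).length := by omega
    have hgv : ((Q.takeUntil s hs).append (Q.dropUntil s hs)).getVert
        ((Q.takeUntil s hs).length) = s := by
      rw [Walk.getVert_append]
      simp
    have hgv2 : Q.getVert ((Q.takeUntil s hs).length) = s :=
      (congrArg (fun p => Walk.getVert p ((Q.takeUntil s hs).length)) hspec).symm.trans hgv
    rw [hidx]
    exact hgv2.symm

lemma notWTConvex_of_walk {z a b : V} (hza : z ≠ a) (hzb : z ≠ b) (W : G.Walk a b)
    (hW : IsWeaklyTollWalk G W) (hz : z ∈ W.support) :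
    ¬ WTConvex G ({z}ᶜ : Set V) := by
  intro hconv
  have hzint : z ∈ wtInterval G ({z}ᶜ : Set V) := by
    refine Or.inr ⟨a, ?_, b, ?_, W, hW, hz⟩
    · simpa using hza.symm
    · simpa using hzb.symm
  rw [WTConvex] at hconv
  rw [hconv] at hzint
  simp at hzint

lemma subNbhd {x y : V} (hy : WTConvex G ({y}ᶜ : Set V)) (hadj : G.Adj x y) :
    closedNbhd G y ⊆ closedNbhd G x := by
  intro c hc
  by_contra hcx
  simp only [closedNbhd, Set.mem_insert_iff, SimpleGraph.mem_neighborSet, not_or] at hc hcx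
  obtain ⟨hcx1, hcx2⟩ := hcx
  rcases hc with rfl | hyc
  · exact hcx2 hadj
  · -- walk x, y, c kills extremeness of y
    have hcy : c ≠ y := fun h => (h ▸ hyc).ne rfl
    have hW : IsWeaklyTollWalk G (Walk.cons hadj (Walk.cons hyc Walk.nil)) := by
      refine ⟨fun h => hcx1 h.symm, fun h => hcx2 h, ?_, ?_⟩
      · intro s hs hsadj
        simp only [Walk.support_cons, Walk.support_nil, List.mem_cons,
          List.mem_singleton] at hs
        rcases hs with rfl | rfl | rfl | hs
        · exact absurd hsadj (G.loopless.irrefl _)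
        · rfl
        · exact absurd hsadj hcx2
        · simp at hs
      · intro s hs hsadj
        simp only [Walk.support_cons, Walk.support_nil, List.mem_cons,
          List.mem_singleton] at hs
        rcases hs with rfl | rfl | rfl | hs
        · exact absurd hsadj hcx2
        · rfl
        · exact absurd hsadj (G.loopless.irrefl _)
        · simp at hs
    refine notWTConvex_of_walk hadj.ne' hcy.symm _ hW ?_ hy
    simp [Walk.support_cons]

lemma lem1 {x y : V} (hx : WTConvex G ({x}ᶜ : Set V)) (hy : WTConvex G ({y}ᶜ : Set V))
    (hadj : G.Adj x y) : closedNbhd G x = closedNbhd G y :=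
  le_antisymm (subNbhd hx hadj.symm) (subNbhd hy hadj)

/-- Construction (i): a weakly toll walk `x, c, z` followed by a shortest `z→y` walk,
where `c` is the neighbor of `z` on a shortest `z→y` walk and `x` is adjacent to `c`. -/
lemma caseA {x y z : V} (hxy : x ≠ y)
    (naxy : ¬ G.Adj x y) (nazx : ¬ G.Adj z x) (nazy : ¬ G.Adj z y)
    (h2 : G.dist z y ≤ G.dist x y) (Q : G.Walk z y) (hQ : Q.length = G.dist z y)
    (hQpos : 0 < Q.length) (hxc : G.Adj x (Q.getVert 1)) :
    ∃ p : G.Walk x y, IsWeaklyTollWalk G p ∧ z ∈ p.support := by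
  have hzc : G.Adj (Q.getVert 1) z := by
    have := Q.adj_getVert_succ (i := 0) hQpos
    simpa [Walk.getVert_zero] using this.symm
  set W : G.Walk x y := Walk.cons hxc (Walk.cons hzc Q) with hWdef
  have hWlen : W.length = Q.length + 2 := by simp [hWdef, Walk.length_cons]
  have hW1 : W.getVert 1 = Q.getVert 1 := by
    simp [hWdef, Walk.getVert_cons_succ, Walk.getVert_zero]
  have hWpen : W.getVert (W.length - 1) = Q.getVert (Q.length - 1) := by
    have hidx : W.length - 1 = (Q.length - 1) + 1 + 1 := by omega
    rw [hidx, hWdef]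
    rw [Walk.getVert_cons_succ, Walk.getVert_cons_succ]
  have hsupp : ∀ s, s ∈ W.support ↔ s = x ∨ s = Q.getVert 1 ∨ s ∈ Q.support := by
    intro s
    simp [hWdef, Walk.support_cons]
  have hcQ : Q.getVert 1 ∈ Q.support :=
    Walk.mem_support_iff_exists_getVert.mpr ⟨1, rfl, by omega⟩
  refine ⟨W, ⟨hxy, naxy, ?_, ?_⟩, ?_⟩
  · intro s hs hsadj
    rw [hW1]
    rcases (hsupp s).mp hs with rfl | rfl | hsQ
    · exact absurd hsadj (G.loopless.irrefl _)
    · rfl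
    · rcases key1 Q hQ h2 hsQ hsadj with rfl | h
      · exact absurd hsadj.symm nazx
      · exact h
  · intro s hs hsadj
    rw [hWpen]
    rcases (hsupp s).mp hs with rfl | rfl | hsQ
    · exact absurd hsadj naxy
    · exact key2 Q hQ hcQ hsadj
    · exact key2 Q hQ hsQ hsadj
  · exact (hsupp z).mpr (Or.inr (Or.inr Q.start_mem_support))

/-- Construction (iii): shortest `x→z` walk followed by shortest `z→y` walk. -/
lemma caseC {x y z : V} (hxy : x ≠ y)
    (naxy : ¬ G.Adj x y) (nazx : ¬ G.Adj z x) (nazy : ¬ G.Adj z y)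
    (h1 : G.dist z x ≤ G.dist x y) (h2 : G.dist z y ≤ G.dist x y)
    (P : G.Walk z x) (hP : P.length = G.dist z x) (hP2 : 2 ≤ P.length)
    (Q : G.Walk z y) (hQ : Q.length = G.dist z y) (hQpos : 0 < Q.length)
    (hxc : ¬ G.Adj x (Q.getVert 1)) (hyc : ¬ G.Adj y (P.getVert 1)) :
    ∃ p : G.Walk x y, IsWeaklyTollWalk G p ∧ z ∈ p.support := by
  set W : G.Walk x y := P.reverse.append Q with hWdef
  have hWlen : W.length = P.length + Q.length := by
    simp [hWdef, Walk.length_append, Walk.length_reverse]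
  have hW1 : W.getVert 1 = P.getVert (P.length - 1) := by
    rw [hWdef, Walk.getVert_append]
    rw [if_pos (by rw [Walk.length_reverse]; omega)]
    rw [Walk.getVert_reverse]
  have hWpen : W.getVert (W.length - 1) = Q.getVert (Q.length - 1) := by
    rw [hWdef, Walk.getVert_append]
    rw [if_neg (by rw [Walk.length_reverse]; simp [Walk.length_append, Walk.length_reverse]; omega)]
    congr 1
    simp [Walk.length_append, Walk.length_reverse]
    omega
  have hsupp : ∀ s, s ∈ W.support ↔ s ∈ P.support ∨ s ∈ Q.support := by
    intro s
    rw [hWdef, Walk.mem_support_append_iff, Walk.support_reverse, List.mem_reverse]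
  have hr' : G.dist z x ≤ G.dist y x := by
    rw [SimpleGraph.dist_comm (u := y)]
    exact h1
  refine ⟨W, ⟨hxy, naxy, ?_, ?_⟩, ?_⟩
  · intro s hs hsadj
    rw [hW1]
    rcases (hsupp s).mp hs with hsP | hsQ
    · exact key2 P hP hsP hsadj.symm
    · rcases key1 Q hQ h2 hsQ hsadj with rfl | rfl
      · exact absurd hsadj.symm nazx
      · exact absurd hsadj hxc
  · intro s hs hsadj
    rw [hWpen]
    rcases (hsupp s).mp hs with hsP | hsQ
    · rcases key1 P hP hr' hsP hsadj.symm with rfl | rfl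
      · exact absurd hsadj nazy
      · exact absurd hsadj.symm hyc
    · exact key2 Q hQ hsQ hsadj
  · exact (hsupp z).mpr (Or.inl P.start_mem_support)

/-- Among three pairwise nonadjacent distinct vertices, if `z` is off a pair `x, y`
realizing the maximum pairwise distance, then `z` is not weakly toll extreme. -/
lemma lem2 (hconn : G.Connected) {x y z : V} (hxy : x ≠ y) (hzx : z ≠ x) (hzy : z ≠ y)
    (naxy : ¬ G.Adj x y) (nazx : ¬ G.Adj z x) (nazy : ¬ G.Adj z y)
    (h1 : G.dist z x ≤ G.dist x y) (h2 : G.dist z y ≤ G.dist x y) :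
    ¬ WTConvex G ({z}ᶜ : Set V) := by
  obtain ⟨Q, hQ⟩ := hconn.exists_walk_length_eq_dist z y
  obtain ⟨P, hP⟩ := hconn.exists_walk_length_eq_dist z x
  have hQpos : 0 < Q.length := hQ ▸ hconn.pos_dist_of_ne hzy
  have hPpos : 0 < P.length := hP ▸ hconn.pos_dist_of_ne hzx
  have hP2 : 2 ≤ P.length := by
    rcases Nat.lt_or_ge P.length 2 with h | h
    · exfalso
      have h1' : P.length = 1 := by omega
      have : G.Adj z (P.getVert 1) := by
        have := P.adj_getVert_succ (i := 0) hPpos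
        simpa [Walk.getVert_zero] using this
      rw [← h1', Walk.getVert_length] at this
      exact nazx this
    · exact h
  have hQ2 : 2 ≤ Q.length := by
    rcases Nat.lt_or_ge Q.length 2 with h | h
    · exfalso
      have h1' : Q.length = 1 := by omega
      have : G.Adj z (Q.getVert 1) := by
        have := Q.adj_getVert_succ (i := 0) hQpos
        simpa [Walk.getVert_zero] using this
      rw [← h1', Walk.getVert_length] at this
      exact nazy this
    · exact h
  by_cases hxc : G.Adj x (Q.getVert 1)
  · obtain ⟨W, hW, hzW⟩ := caseA hxy naxy nazx nazy h2 Q hQ hQpos hxc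
    exact notWTConvex_of_walk hzx hzy W hW hzW
  · by_cases hyc : G.Adj y (P.getVert 1)
    · have h2' : G.dist z x ≤ G.dist y x := by
        rw [SimpleGraph.dist_comm (u := y)]
        exact h1
      obtain ⟨W, hW, hzW⟩ := caseA hxy.symm (fun h => naxy h.symm) nazy nazx h2' P hP hPpos hyc
      exact notWTConvex_of_walk hzy hzx W hW hzW
    · obtain ⟨W, hW, hzW⟩ := caseC hxy naxy nazx nazy h1 h2 P hP hP2 Q hQ hQpos hxc hyc
      exact notWTConvex_of_walk hzx hzy W hW hzW

end Aux

/-- the weakly toll extreme vertices of a connected non-complete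
graph are contained in the union of at most two true-twin classes. -/
theorem stmt13 [Fintype V] (G : SimpleGraph V) (hconn : G.Connected)
    (hnc : ∃ a b : V, a ≠ b ∧ ¬ G.Adj a b) :
    ∃ u v : V, {x : V | WTConvex G ({x}ᶜ : Set V)} ⊆ twinClass G u ∪ twinClass G v := by
  classical
  obtain ⟨a, -, -, -⟩ := hnc
  by_cases hE : ∃ x, WTConvex G ({x}ᶜ : Set V)
  · obtain ⟨x, hx⟩ := hE
    by_cases hall : ∀ w, WTConvex G ({w}ᶜ : Set V) → w ∈ twinClass G x
    · exact ⟨x, x, fun w hw => Or.inl (hall w hw)⟩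
    · push_neg at hall
      obtain ⟨y, hy, hyx⟩ := hall
      refine ⟨x, y, fun z hz => ?_⟩
      by_contra hzc
      simp only [Set.mem_union, not_or] at hzc
      obtain ⟨hzcx, hzcy⟩ := hzc
      rw [mem_twinClass_iff] at hzcx hzcy hyx
      have hz' : WTConvex G ({z}ᶜ : Set V) := hz
      have hzx : z ≠ x := fun h => hzcx (by rw [h])
      have hzy : z ≠ y := fun h => hzcy (by rw [h])
      have hxy : x ≠ y := fun h => hyx (by rw [h])
      have naxy : ¬ G.Adj x y := fun h => hyx (lem1 hx hy h).symm
      have nazx : ¬ G.Adj z x := fun h => hzcx (lem1 hz' hx h)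
      have nazy : ¬ G.Adj z y := fun h => hzcy (lem1 hz' hy h)
      rcases le_total (G.dist z x) (G.dist x y) with hBA | hAB
      · rcases le_total (G.dist z y) (G.dist x y) with hCA | hAC
        · exact lem2 hconn hxy hzx hzy naxy nazx nazy hBA hCA hz'
        · -- dist z y is maximal; kill x (endpoints z, y)
          have t1 : G.dist x z ≤ G.dist z y := by
            rw [SimpleGraph.dist_comm (u := x)]
            exact le_trans hBA hAC
          have t2 : G.dist x y ≤ G.dist z y := hAC
          exact lem2 hconn hzy (Ne.symm hzx) hxy nazy (fun h => nazx h.symm)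
            (fun h => naxy h) t1 t2 hx
      · rcases le_total (G.dist z y) (G.dist z x) with hCB | hBC
        · -- dist z x is maximal; kill y (endpoints z, x)
          have t1 : G.dist y z ≤ G.dist z x := by
            rw [SimpleGraph.dist_comm (u := y)]
            exact hCB
          have t2 : G.dist y x ≤ G.dist z x := by
            rw [SimpleGraph.dist_comm (u := y)]
            exact hAB
          exact lem2 hconn hzx (Ne.symm hzy) (Ne.symm hxy) nazx (fun h => nazy h.symm)
            (fun h => naxy h.symm) t1 t2 hy
        · -- dist z y is maximal; kill x
          have t1 : G.dist x z ≤ G.dist z y := by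
            rw [SimpleGraph.dist_comm (u := x)]
            exact hBC
          have t2 : G.dist x y ≤ G.dist z y := le_trans hAB hBC
          exact lem2 hconn hzy (Ne.symm hzx) hxy nazy (fun h => nazx h.symm)
            (fun h => naxy h) t1 t2 hx
  · exact ⟨a, a, fun z hz => absurd ⟨z, hz⟩ hE⟩
end
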